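/- arXiv:0910.1360 — 8 statements merged into one kernel-verified Lean document; each statement's English description precedes it below -/
import Mathlib

section
/- Let X be a locally compact non-compact Hausdorff space and let f be a continuous map from X into a compact Hausdorff space K with X ∩ K = ∅. If both the one-point compactification A(X) and K are Rosenthal compact, then the compactification A_f(X,f) is Rosenthal compact. -/
open Filter Topology Set

universe u v

/-- A real-valued function is of Baire class one if it is a pointwise limit of a
sequence of continuous functions. -/
def BaireClassOne {P : Type*} [TopologicalSpace P] (f : P → ℝ) : Prop :=
  ∃ g : ℕ → P → ℝ, (∀ n, Continuous (g n)) ∧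
    ∀ x, Filter.Tendsto (fun n => g n x) Filter.atTop (nhds (f x))

/-- A Rosenthal compact: a compact space homeomorphic to a subspace of the space
`B₁(P)` of Baire class one functions on a Polish space `P`, with the pointwise topology. -/
def IsRosenthal (K : Type u) [TopologicalSpace K] : Prop :=
  CompactSpace K ∧
    ∃ (P : Type) (_ : TopologicalSpace P) (_ : PolishSpace P) (F : Set (P → ℝ)),
      (∀ f ∈ F, BaireClassOne f) ∧ Nonempty (K ≃ₜ F)

/-- The defining conditions for the topology of the compactification `A_f(X,f)`,
modelled on the disjoint union `X ⊕ K`: it is compact Hausdorff, extends the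
topologies of `X` and of `K` (i.e. the two inclusions are embeddings), and makes
the retraction `r` (given by `f` on `X` and the identity on `K`) continuous. -/
def CompactExtTopology (X K : Type u) [tX : TopologicalSpace X]
    [tK : TopologicalSpace K] (f : X → K) (τ : TopologicalSpace (X ⊕ K)) : Prop :=
  @CompactSpace (X ⊕ K) τ ∧ @T2Space (X ⊕ K) τ ∧
    @IsEmbedding X (X ⊕ K) tX τ Sum.inl ∧ @IsEmbedding K (X ⊕ K) tK τ Sum.inr ∧
    @Continuous (X ⊕ K) K τ tK (Sum.elim f id)

/-- Baire class one is preserved by `Sum.elim`. -/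
lemma BaireClassOne.sumElim {P Q : Type*} [TopologicalSpace P] [TopologicalSpace Q]
    {u : P → ℝ} {v : Q → ℝ} (hu : BaireClassOne u) (hv : BaireClassOne v) :
    BaireClassOne (Sum.elim u v) := by
  obtain ⟨g, hg, hgl⟩ := hu
  obtain ⟨h, hh, hhl⟩ := hv
  refine ⟨fun n => Sum.elim (g n) (h n), fun n => (hg n).sumElim (hh n), fun x => ?_⟩
  cases x with
  | inl p => simpa using hgl p
  | inr q => simpa using hhl q

/-- A compact space that embeds into a Rosenthal compact is Rosenthal. -/
lemma IsRosenthal.of_isEmbedding {A : Type u} {B : Type v} [TopologicalSpace A]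
    [TopologicalSpace B] (hB : IsRosenthal B) (hA : CompactSpace A)
    {e : A → B} (he : IsEmbedding e) : IsRosenthal A := by
  obtain ⟨_, P, _, _, F, hF, ⟨φ⟩⟩ := hB
  refine ⟨hA, P, ‹_›, ‹_›, Set.range (fun a => ((φ (e a) : F) : P → ℝ)), ?_, ?_⟩
  · rintro _ ⟨a, rfl⟩
    exact hF _ (φ (e a)).2
  · have hemb : IsEmbedding (fun a => ((φ (e a) : F) : P → ℝ)) :=
      IsEmbedding.subtypeVal.comp ((φ.isEmbedding).comp he)
    exact ⟨hemb.toHomeomorph⟩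

/-- The product of two Rosenthal compacts is Rosenthal. -/
lemma IsRosenthal.prod {A : Type u} {B : Type v} [TopologicalSpace A] [TopologicalSpace B]
    (hA : IsRosenthal A) (hB : IsRosenthal B) : IsRosenthal (A × B) := by
  obtain ⟨hAc, P, _, _, F, hF, ⟨φ⟩⟩ := hA
  obtain ⟨hBc, Q, _, _, G, hG, ⟨ψ⟩⟩ := hB
  haveI := hAc; haveI := hBc
  -- the homeomorphism from pairs of functions to functions on the sum
  let Φ : (P → ℝ) × (Q → ℝ) ≃ₜ (P ⊕ Q → ℝ) :=
    (Homeomorph.sumArrowHomeomorphProdArrow).symm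
  refine ⟨inferInstance, P ⊕ Q, inferInstance, inferInstance, Φ '' (F ×ˢ G), ?_, ?_⟩
  · rintro _ ⟨⟨u, v⟩, ⟨hu, hv⟩, rfl⟩
    have : Φ (u, v) = Sum.elim u v := by
      ext x; cases x <;> rfl
    rw [this]
    exact (hF u hu).sumElim (hG v hv)
  · exact ⟨((φ.prodCongr ψ).trans (Homeomorph.Set.prod F G).symm).trans
      (Φ.image (F ×ˢ G))⟩

/-- If both the one-point compactification of `X` and `K` are Rosenthal compact,
then the compactification `A_f(X,f)` is Rosenthal compact. -/
theorem isRosenthal_compactExt {X K : Type u} [TopologicalSpace X] [TopologicalSpace K]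
    [LocallyCompactSpace X] [T2Space X] [NoncompactSpace X] [CompactSpace K] [T2Space K]
    (f : X → K) (hf : Continuous f)
    (τ : TopologicalSpace (X ⊕ K)) (hτ : CompactExtTopology X K f τ)
    (hX : IsRosenthal (OnePoint X)) (hK : IsRosenthal K) :
    @IsRosenthal (X ⊕ K) τ := by
  obtain ⟨hcomp, ht2, hinl, hinr, hr⟩ := hτ
  letI : TopologicalSpace (X ⊕ K) := τ
  haveI : CompactSpace (X ⊕ K) := hcomp
  haveI : T2Space (X ⊕ K) := ht2
  -- `Sum.inr` has closed (compact) range, hence `Sum.inl` has open range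
  have hinr_range : IsClosed (Set.range (Sum.inr : K → X ⊕ K)) :=
    (isCompact_range hinr.continuous).isClosed
  have hinl_open : IsOpenEmbedding (Sum.inl : X → X ⊕ K) :=
    ⟨hinl, by rw [← Set.compl_range_inr]; exact hinr_range.isOpen_compl⟩
  -- the map to `OnePoint X`
  set h : X ⊕ K → OnePoint X := Sum.elim (fun x => (x : OnePoint X)) (fun _ => (OnePoint.infty : OnePoint X))
    with hh_def
  have hh_cont : Continuous h := by
    rw [continuous_def]
    intro s hs
    by_cases hmem : (OnePoint.infty : OnePoint X) ∈ s
    · -- the preimage is the complement of the image of a compact set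
      obtain ⟨-, hcpt⟩ := (OnePoint.isOpen_iff_of_mem hmem).1 hs
      have : h ⁻¹' s = (Sum.inl '' (((↑) : X → OnePoint X) ⁻¹' s)ᶜ)ᶜ := by
        ext z
        cases z with
        | inl x =>
          simp only [Set.mem_preimage, hh_def, Sum.elim_inl, Set.mem_compl_iff,
            Set.mem_image, Sum.inl.injEq]
          constructor
          · rintro hx ⟨y, hy, rfl⟩
            exact hy hx
          · intro hc
            by_contra hx
            exact hc ⟨x, hx, rfl⟩
        | inr k =>
          simp [hh_def, hmem]
      rw [this]
      exact ((hcpt.image hinl.continuous).isClosed).isOpen_compl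
    · -- the preimage is the image of an open set under the open embedding `Sum.inl`
      have hopen : IsOpen (((↑) : X → OnePoint X) ⁻¹' s) :=
        (OnePoint.isOpen_iff_of_notMem hmem).1 hs
      have : h ⁻¹' s = Sum.inl '' (((↑) : X → OnePoint X) ⁻¹' s) := by
        ext z
        cases z with
        | inl x => simp [hh_def]
        | inr k => simp [hh_def, hmem]
      rw [this]
      exact hinl_open.isOpenMap _ hopen
  -- the embedding into `OnePoint X × K`
  set g : X ⊕ K → OnePoint X × K := fun z => (h z, Sum.elim f id z) with hg_def
  have hg_cont : Continuous g := hh_cont.prodMk hr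
  have hg_inj : Function.Injective g := by
    rintro (x | k) (y | l) hxy
    · simp only [hg_def, hh_def, Prod.mk.injEq, Sum.elim_inl] at hxy
      exact congrArg Sum.inl (OnePoint.coe_injective hxy.1)
    · exact absurd (congrArg Prod.fst hxy) (by simp [hg_def, hh_def, OnePoint.infty_ne_coe])
    · exact absurd (congrArg Prod.fst hxy) (by simp [hg_def, hh_def, (OnePoint.infty_ne_coe _).symm])
    · simp only [hg_def, Prod.mk.injEq, Sum.elim_inr, id_eq] at hxy
      exact congrArg Sum.inr hxy.2
  have hg_emb : IsEmbedding g := (hg_cont.isClosedEmbedding hg_inj).isEmbedding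
  exact (hX.prod hK).of_isEmbedding ‹CompactSpace (X ⊕ K)› hg_emb
end

section
/- Let X be a locally compact non-compact Hausdorff space and let f: X → K be a continuous map into a compact Hausdorff space K with X ∩ K = ∅. Then there exists a unique compact Hausdorff topology τ on X ∪ K which extends the topologies of X and of K and for which the map r: X ∪ K → K, defined by r↾X = f and r↾K = id_K, is continuous; moreover, the family B = τ_X ∪ { (U ∪ f⁻¹(U)) \ F : U open in K, F ⊆ X compact } is a basis of τ, where τ_X is the topology of X. -/
open Filter Topology Set

universe u v

namespace AFComp

variable {X K : Type u} [tX : TopologicalSpace X] [tK : TopologicalSpace K]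

/-- The basis for the compactification topology. -/
def B (f : X → K) : Set (Set (X ⊕ K)) :=
  {S : Set (X ⊕ K) | ∃ V : Set X, IsOpen V ∧ S = Sum.inl '' V} ∪
    {S : Set (X ⊕ K) | ∃ (U : Set K) (F : Set X), IsOpen U ∧ IsCompact F ∧
      S = (Sum.inl '' (f ⁻¹' U) ∪ Sum.inr '' U) \ Sum.inl '' F}

/-- The compactification topology. -/
def τ (f : X → K) : TopologicalSpace (X ⊕ K) := .generateFrom (B f)

lemma r_preimage (f : X → K) (U : Set K) :
    Sum.elim f id ⁻¹' U = Sum.inl '' (f ⁻¹' U) ∪ Sum.inr '' U := by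
  ext (x | k) <;> simp

lemma inl_preimage_basic (f : X → K) (U : Set K) (F : Set X) :
    Sum.inl ⁻¹' ((Sum.inl '' (f ⁻¹' U) ∪ Sum.inr '' U) \ Sum.inl '' F)
      = f ⁻¹' U \ F := by
  ext x; simp [Sum.inl_injective.mem_set_image]

lemma inr_preimage_basic (f : X → K) (U : Set K) (F : Set X) :
    Sum.inr ⁻¹' ((Sum.inl '' (f ⁻¹' U) ∪ Sum.inr '' U) \ Sum.inl '' F) = U := by
  ext k; simp [Sum.inr_injective.mem_set_image]

lemma isBasis (f : X → K) (hf : Continuous f) [T2Space X] :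
    @TopologicalSpace.IsTopologicalBasis _ (τ f) (B f) := by
  letI := τ f
  refine ⟨?_, ?_, rfl⟩
  · rintro t₁ (⟨V₁, hV₁, rfl⟩ | ⟨U₁, F₁, hU₁, hF₁, rfl⟩) t₂
      (⟨V₂, hV₂, rfl⟩ | ⟨U₂, F₂, hU₂, hF₂, rfl⟩) p hp
    · exact ⟨Sum.inl '' (V₁ ∩ V₂), Or.inl ⟨_, hV₁.inter hV₂, rfl⟩,
        (Set.image_inter Sum.inl_injective (f := Sum.inl)) ▸ hp,
        (Set.image_inter Sum.inl_injective (f := Sum.inl)).le⟩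
    · refine ⟨Sum.inl '' ((V₁ ∩ f ⁻¹' U₂) \ F₂), Or.inl ⟨_,
        ((hV₁.inter (hU₂.preimage hf)).sdiff hF₂.isClosed), rfl⟩, ?_, ?_⟩
      · obtain ⟨⟨x, hx, rfl⟩, h2⟩ := hp
        have hx2 : Sum.inl x ∈ (Sum.inl '' (f ⁻¹' U₂) ∪ Sum.inr '' U₂) \ Sum.inl '' F₂ := h2
        have := (inl_preimage_basic f U₂ F₂) ▸ (Set.mem_preimage.mpr hx2)
        exact ⟨x, ⟨⟨hx, this.1⟩, this.2⟩, rfl⟩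
      · rintro q ⟨x, ⟨⟨hxV, hxU⟩, hxF⟩, rfl⟩
        exact ⟨⟨x, hxV, rfl⟩, Or.inl ⟨x, hxU, rfl⟩,
          fun ⟨y, hy, hyx⟩ => hxF (Sum.inl_injective hyx ▸ hy)⟩
    · refine ⟨Sum.inl '' ((V₂ ∩ f ⁻¹' U₁) \ F₁), Or.inl ⟨_,
        ((hV₂.inter (hU₁.preimage hf)).sdiff hF₁.isClosed), rfl⟩, ?_, ?_⟩
      · obtain ⟨h2, ⟨x, hx, rfl⟩⟩ := hp
        have := (inl_preimage_basic f U₁ F₁) ▸ (Set.mem_preimage.mpr h2)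
        exact ⟨x, ⟨⟨hx, this.1⟩, this.2⟩, rfl⟩
      · rintro q ⟨x, ⟨⟨hxV, hxU⟩, hxF⟩, rfl⟩
        exact ⟨⟨Or.inl ⟨x, hxU, rfl⟩,
          fun ⟨y, hy, hyx⟩ => hxF (Sum.inl_injective hyx ▸ hy)⟩, ⟨x, hxV, rfl⟩⟩
    · refine ⟨(Sum.inl '' (f ⁻¹' (U₁ ∩ U₂)) ∪ Sum.inr '' (U₁ ∩ U₂)) \ Sum.inl '' (F₁ ∪ F₂),
        Or.inr ⟨U₁ ∩ U₂, F₁ ∪ F₂, hU₁.inter hU₂, hF₁.union hF₂, rfl⟩, ?_⟩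
      have e1 := r_preimage f U₁
      have e2 := r_preimage f U₂
      have e3 := r_preimage f (U₁ ∩ U₂)
      rw [← e1, ← e2] at hp
      rw [← e1, ← e2, ← e3, Set.preimage_inter, Set.image_union]
      constructor
      · exact ⟨⟨hp.1.1, hp.2.1⟩, fun h => h.elim (fun h1 => hp.1.2 h1) fun h2 => hp.2.2 h2⟩
      · rintro q ⟨⟨h1, h2⟩, h3⟩
        exact ⟨⟨h1, fun h => h3 (Or.inl h)⟩, ⟨h2, fun h => h3 (Or.inr h)⟩⟩
  · apply Set.eq_univ_of_forall
    rintro (x | k)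
    · exact ⟨Sum.inl '' (univ : Set X), Or.inl ⟨_, isOpen_univ, rfl⟩, ⟨x, trivial, rfl⟩⟩
    · refine ⟨(Sum.inl '' (f ⁻¹' (univ : Set K)) ∪ Sum.inr '' (univ : Set K)) \
        Sum.inl '' (∅ : Set X), Or.inr ⟨univ, ∅, isOpen_univ, isCompact_empty, rfl⟩, ?_⟩
      simp

lemma continuous_inl (f : X → K) (hf : Continuous f) [T2Space X] :
    @Continuous X (X ⊕ K) tX (τ f) Sum.inl := by
  rw [τ, continuous_generateFrom_iff]
  rintro S (⟨V, hV, rfl⟩ | ⟨U, F, hU, hF, rfl⟩)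
  · rw [Set.preimage_image_eq _ Sum.inl_injective]; exact hV
  · rw [inl_preimage_basic]
    exact (hU.preimage hf).sdiff hF.isClosed

lemma continuous_inr (f : X → K) :
    @Continuous K (X ⊕ K) tK (τ f) Sum.inr := by
  rw [τ, continuous_generateFrom_iff]
  rintro S (⟨V, hV, rfl⟩ | ⟨U, F, hU, hF, rfl⟩)
  · have : Sum.inr ⁻¹' (Sum.inl '' V) = (∅ : Set K) := by ext k; simp
    rw [this]; exact isOpen_empty
  · rw [inr_preimage_basic]; exact hU

lemma isOpen_basic (f : X → K) {S : Set (X ⊕ K)} (h : S ∈ B f) :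
    IsOpen[τ f] S :=
  TopologicalSpace.isOpen_generateFrom_of_mem h

lemma embedding_inl (f : X → K) (hf : Continuous f) [T2Space X] :
    @IsEmbedding X (X ⊕ K) tX (τ f) Sum.inl := by
  letI := τ f
  refine ⟨⟨le_antisymm (continuous_iff_le_induced.mp (continuous_inl f hf)) ?_⟩,
    Sum.inl_injective⟩
  intro V hV
  exact (@isOpen_induced_iff X (X ⊕ K) (τ f) V Sum.inl).mpr
    ⟨Sum.inl '' V, isOpen_basic f (Or.inl ⟨V, hV, rfl⟩),
      Set.preimage_image_eq _ Sum.inl_injective⟩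

lemma embedding_inr (f : X → K) :
    @IsEmbedding K (X ⊕ K) tK (τ f) Sum.inr := by
  letI := τ f
  refine ⟨⟨le_antisymm (continuous_iff_le_induced.mp (continuous_inr f)) ?_⟩,
    Sum.inr_injective⟩
  intro U hU
  refine (@isOpen_induced_iff K (X ⊕ K) (τ f) U Sum.inr).mpr
    ⟨(Sum.inl '' (f ⁻¹' U) ∪ Sum.inr '' U) \ Sum.inl '' (∅ : Set X),
      isOpen_basic f (Or.inr ⟨U, ∅, hU, isCompact_empty, rfl⟩), ?_⟩
  rw [inr_preimage_basic]

lemma continuous_r (f : X → K) :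
    @Continuous (X ⊕ K) K (τ f) tK (Sum.elim f id) := by
  rw [@continuous_def _ _ (τ f) tK]
  intro U hU
  have : Sum.elim f id ⁻¹' U =
      (Sum.inl '' (f ⁻¹' U) ∪ Sum.inr '' U) \ Sum.inl '' (∅ : Set X) := by
    rw [Set.image_empty, Set.diff_empty, r_preimage]
  rw [this]
  exact isOpen_basic f (Or.inr ⟨U, ∅, hU, isCompact_empty, rfl⟩)

lemma t2 (f : X → K) (hf : Continuous f) [T2Space X] [T2Space K]
    [LocallyCompactSpace X] : @T2Space (X ⊕ K) (τ f) := by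
  letI := τ f
  constructor
  have sep : ∀ (x : X) (k : K), ∃ u v : Set (X ⊕ K),
      IsOpen u ∧ IsOpen v ∧ Sum.inl x ∈ u ∧ Sum.inr k ∈ v ∧ Disjoint u v := by
    intro x k
    obtain ⟨F, hF, hFx⟩ := exists_compact_mem_nhds x
    refine ⟨Sum.inl '' interior F,
      (Sum.inl '' (f ⁻¹' (univ : Set K)) ∪ Sum.inr '' (univ : Set K)) \ Sum.inl '' F,
      isOpen_basic f (Or.inl ⟨_, isOpen_interior, rfl⟩),
      isOpen_basic f (Or.inr ⟨univ, F, isOpen_univ, hF, rfl⟩),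
      ⟨x, mem_interior_iff_mem_nhds.mpr hFx, rfl⟩, by simp, ?_⟩
    rw [Set.disjoint_left]
    rintro p ⟨y, hy, rfl⟩ ⟨-, h2⟩
    exact h2 ⟨y, interior_subset hy, rfl⟩
  rintro (x | k) (y | l) hne
  · obtain ⟨V₁, V₂, h₁, h₂, hx, hy, hd⟩ :=
      t2_separation (fun h : x = y => hne (by rw [h]))
    refine ⟨Sum.inl '' V₁, Sum.inl '' V₂, isOpen_basic f (Or.inl ⟨_, h₁, rfl⟩),
      isOpen_basic f (Or.inl ⟨_, h₂, rfl⟩), ⟨x, hx, rfl⟩, ⟨y, hy, rfl⟩, ?_⟩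
    rw [Set.disjoint_left]
    rintro p ⟨a, ha, rfl⟩ ⟨b, hb, hba⟩
    exact Set.disjoint_left.mp hd ha (Sum.inl_injective hba ▸ hb)
  · obtain ⟨u, v, hu, hv, hxu, hlv, hd⟩ := sep x l
    exact ⟨u, v, hu, hv, hxu, hlv, hd⟩
  · obtain ⟨u, v, hu, hv, hyu, hkv, hd⟩ := sep y k
    exact ⟨v, u, hv, hu, hkv, hyu, hd.symm⟩
  · obtain ⟨U₁, U₂, h₁, h₂, hk, hl, hd⟩ :=
      t2_separation (fun h : k = l => hne (by rw [h]))
    refine ⟨Sum.elim f id ⁻¹' U₁, Sum.elim f id ⁻¹' U₂,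
      (continuous_r f).isOpen_preimage _ h₁, (continuous_r f).isOpen_preimage _ h₂,
      hk, hl, hd.preimage _⟩

lemma compactSpace (f : X → K) (hf : Continuous f) [T2Space X] [CompactSpace K] :
    @CompactSpace (X ⊕ K) (τ f) := by
  classical
  letI := τ f
  constructor
  rw [isCompact_iff_finite_subcover]
  intro ι U hU hcover
  -- for each k pick a basic neighborhood inside some U i
  have h1 : ∀ k : K, ∃ (Uk : Set K) (Fk : Set X) (i : ι), IsOpen Uk ∧ IsCompact Fk ∧
      k ∈ Uk ∧ (Sum.elim f id ⁻¹' Uk \ Sum.inl '' Fk) ⊆ U i := by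
    intro k
    obtain ⟨i, hi⟩ := Set.mem_iUnion.mp (hcover (Set.mem_univ (Sum.inr k)))
    obtain ⟨S, hSB, hkS, hSU⟩ :=
      (isBasis f hf).exists_subset_of_mem_open hi (hU i)
    rcases hSB with ⟨V, hV, rfl⟩ | ⟨Uk, Fk, hUk, hFk, rfl⟩
    · exact absurd hkS (by simp)
    · rw [← r_preimage] at hkS hSU
      refine ⟨Uk, Fk, i, hUk, hFk, ?_, hSU⟩
      simpa using hkS.1
  choose Uk Fk ik hUk hFk hmem hsub using h1
  obtain ⟨t, ht⟩ := (isCompact_univ (X := K)).elim_finite_subcover Uk hUk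
    (fun k _ => Set.mem_iUnion.mpr ⟨k, hmem k⟩)
  set F : Set X := ⋃ k ∈ t, Fk k with hFdef
  have hFc : IsCompact F := t.finite_toSet.isCompact_biUnion (fun k _ => hFk k)
  have hFimg : IsCompact (Sum.inl '' F) := hFc.image (continuous_inl f hf)
  obtain ⟨t', ht'⟩ := hFimg.elim_finite_subcover U hU
    (fun p _ => hcover (Set.mem_univ p))
  refine ⟨t.image ik ∪ t', ?_⟩
  rintro (x | k') -
  · by_cases hx : x ∈ F
    · obtain ⟨i, hit', hxi⟩ := Set.mem_iUnion₂.mp (ht' ⟨x, hx, rfl⟩)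
      exact Set.mem_iUnion₂.mpr ⟨i, Finset.mem_union_right _ hit', hxi⟩
    · obtain ⟨k, hkt, hfk⟩ := Set.mem_iUnion₂.mp (ht (Set.mem_univ (f x)))
      have hxFk : x ∉ Fk k := fun h => hx (Set.mem_iUnion₂.mpr ⟨k, hkt, h⟩)
      have : Sum.inl x ∈ Sum.elim f id ⁻¹' Uk k \ Sum.inl '' Fk k :=
        ⟨hfk, fun ⟨y, hy, hyx⟩ => hxFk (Sum.inl_injective hyx ▸ hy)⟩
      exact Set.mem_iUnion₂.mpr ⟨ik k,
        Finset.mem_union_left _ (Finset.mem_image_of_mem ik hkt), hsub k this⟩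
  · obtain ⟨k, hkt, hk'⟩ := Set.mem_iUnion₂.mp (ht (Set.mem_univ k'))
    have : Sum.inr k' ∈ Sum.elim f id ⁻¹' Uk k \ Sum.inl '' Fk k :=
      ⟨hk', by simp⟩
    exact Set.mem_iUnion₂.mpr ⟨ik k,
      Finset.mem_union_left _ (Finset.mem_image_of_mem ik hkt), hsub k this⟩

lemma unique (f : X → K) (hf : Continuous f) [T2Space X] [T2Space K]
    [LocallyCompactSpace X] [CompactSpace K]
    (τ' : TopologicalSpace (X ⊕ K)) (h : CompactExtTopology X K f τ') : τ' = τ f := by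
  obtain ⟨hc, ht2, hinl, hinr, hr⟩ := h
  have h1 : @Continuous _ _ τ' (τ f) id := by
    letI := τ'
    haveI : T2Space (X ⊕ K) := ht2
    rw [τ, continuous_generateFrom_iff]
    rintro S (⟨V, hV, rfl⟩ | ⟨U, F, hU, hF, rfl⟩)
    · have hrc : IsClosed (Set.range (Sum.inr : K → X ⊕ K)) := by
        rw [← Set.image_univ]
        exact ((isCompact_univ).image hinr.continuous).isClosed
      have hro : IsOpen (Set.range (Sum.inl : X → X ⊕ K)) := by
        rw [IsCompl.eq_compl Set.isCompl_range_inl_range_inr]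
        exact hrc.isOpen_compl
      exact (IsOpenEmbedding.mk hinl hro).isOpenMap V hV
    · rw [← r_preimage]
      exact (hr.isOpen_preimage U hU).sdiff ((hF.image hinl.continuous).isClosed)
  have hcm : @IsClosedMap _ _ τ' (τ f) id :=
    @Continuous.isClosedMap _ _ τ' (τ f) hc (t2 f hf) _ h1
  have h2 : τ f ≤ τ' := by
    rw [TopologicalSpace.le_def]
    intro s hs
    have hclosed : @IsClosed _ τ' sᶜ := (@isClosed_compl_iff _ τ' s).mpr hs
    have himg := hcm _ hclosed
    rw [Set.image_id] at himg
    exact (@isClosed_compl_iff _ (τ f) s).mp himg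
  exact le_antisymm (continuous_id_iff_le.mp h1) h2

end AFComp

/-- There is a unique compact Hausdorff topology on `X ∪ K` extending the topologies
of `X` and `K` and making the retraction continuous; moreover the family
`τ_X ∪ {(U ∪ f⁻¹(U)) \ F : U open in K, F ⊆ X compact}` is a basis of this topology. -/
theorem existsUnique_compactExtTopology {X K : Type u} [TopologicalSpace X]
    [TopologicalSpace K] [LocallyCompactSpace X] [T2Space X] [NoncompactSpace X]
    [CompactSpace K] [T2Space K] (f : X → K) (hf : Continuous f) :
    ∃ τ : TopologicalSpace (X ⊕ K), CompactExtTopology X K f τ ∧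
      (∀ τ' : TopologicalSpace (X ⊕ K), CompactExtTopology X K f τ' → τ' = τ) ∧
      @TopologicalSpace.IsTopologicalBasis (X ⊕ K) τ
        ({S : Set (X ⊕ K) | ∃ V : Set X, IsOpen V ∧ S = Sum.inl '' V} ∪
          {S : Set (X ⊕ K) | ∃ (U : Set K) (F : Set X), IsOpen U ∧ IsCompact F ∧
            S = (Sum.inl '' (f ⁻¹' U) ∪ Sum.inr '' U) \ Sum.inl '' F}) :=
  ⟨AFComp.τ f,
    ⟨AFComp.compactSpace f hf, AFComp.t2 f hf, AFComp.embedding_inl f hf,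
      AFComp.embedding_inr f, AFComp.continuous_r f⟩,
    fun τ' h => AFComp.unique f hf τ' h, AFComp.isBasis f hf⟩
end

section
/- Let (T,<) be a tree with the interval topology and let f: A(T) → X be a map into a topological space X. Then f is continuous if and only if it satisfies both: (1) lim_{α<λ} f(t_α) = f(t) whenever λ is a regular infinite cardinal and (t_α)_{α<λ} is a strictly increasing sequence in T with t = sup_{α<λ} t_α, where t = ∞ if the sequence is unbounded in T; and (2) lim_{n→∞} f(t_n) = f(∞) whenever (t_n)_{n∈ℕ} is an infinite antichain in T. -/
open Filter Topology Set

universe u v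

/-- A tree in the sense of the paper: a partial order with a minimal element `⊥`,
binary greatest lower bounds, and each set of predecessors `[0,t)` well ordered
(a linearly ordered, well-founded chain). -/
class TreeOrder (T : Type u) extends SemilatticeInf T, OrderBot T where
  chain_lt : ∀ t : T, IsChain (· ≤ ·) {x : T | x < t}
  isWF_lt : ∀ t : T, Set.IsWF {x : T | x < t}

/-- The interval topology, generated by the intervals `(s,t]` (together with the
initial intervals `[0,t]`, which make the root an interior point of `[0,t]`). -/
def intervalTopology (T : Type u) [Preorder T] : TopologicalSpace T :=
  TopologicalSpace.generateFrom
    ({S : Set T | ∃ a b : T, S = Set.Ioc a b} ∪ {S : Set T | ∃ b : T, S = Set.Iic b})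

instance TreeOrder.toTopologicalSpace (T : Type u) [TreeOrder T] : TopologicalSpace T :=
  intervalTopology T

namespace TreeProofAux

variable {T : Type u} [TreeOrder T]

/-- The generating family of the interval topology. -/
def gens (T : Type u) [Preorder T] : Set (Set T) :=
  {S : Set T | ∃ a b : T, S = Set.Ioc a b} ∪ {S : Set T | ∃ b : T, S = Set.Iic b}

lemma isOpen_iff_gen {s : Set T} :
    IsOpen s ↔ TopologicalSpace.GenerateOpen (gens T) s := Iff.rfl

lemma comp_of_le {a b c : T} (ha : a ≤ c) (hb : b ≤ c) : a ≤ b ∨ b ≤ a := by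
  rcases eq_or_lt_of_le ha with rfl | ha'
  · exact Or.inr hb
  rcases eq_or_lt_of_le hb with rfl | hb'
  · exact Or.inl ha'.le
  rcases eq_or_ne a b with rfl | hne
  · exact Or.inl le_rfl
  exact TreeOrder.chain_lt c ha' hb' hne

lemma isWF_Iic (b : T) : (Set.Iic b).IsWF := by
  have h : Set.Iic b = insert b {x : T | x < b} := by
    ext x
    simp only [Set.mem_Iic, Set.mem_insert_iff, Set.mem_setOf_eq]
    constructor
    · intro hx
      rcases hx.lt_or_eq with h | h
      · exact Or.inr h
      · exact Or.inl h
    · rintro (rfl | h)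
      · exact le_rfl
      · exact h.le
  rw [h]
  exact (TreeOrder.isWF_lt b).insert b

lemma isOpen_Ioc' (a b : T) : IsOpen (Set.Ioc a b) :=
  isOpen_iff_gen.2 (.basic _ (Or.inl ⟨a, b, rfl⟩))

lemma isOpen_Iic' (b : T) : IsOpen (Set.Iic b) :=
  isOpen_iff_gen.2 (.basic _ (Or.inr ⟨b, rfl⟩))

lemma genOpen_cases (t : T) {O : Set T} (hO : TopologicalSpace.GenerateOpen (gens T) O) :
    t ∈ O → (∃ a, a < t ∧ Set.Ioc a t ⊆ O) ∨ Set.Iic t ⊆ O := by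
  induction hO with
  | basic s hs =>
    intro ht
    rcases hs with ⟨a, b, rfl⟩ | ⟨b, rfl⟩
    · exact Or.inl ⟨a, ht.1, fun x hx => ⟨hx.1, hx.2.trans ht.2⟩⟩
    · exact Or.inr fun x hx => le_trans hx ht
  | univ => exact fun _ => Or.inr fun x _ => trivial
  | inter s₁ s₂ h₁ h₂ ih₁ ih₂ =>
    intro ht
    rcases ih₁ ht.1 with ⟨a₁, ha₁, hs₁⟩ | hs₁ <;> rcases ih₂ ht.2 with ⟨a₂, ha₂, hs₂⟩ | hs₂
    · rcases comp_of_le ha₁.le ha₂.le with h | h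
      · exact Or.inl ⟨a₂, ha₂, fun x hx => ⟨hs₁ ⟨lt_of_le_of_lt h hx.1, hx.2⟩, hs₂ hx⟩⟩
      · exact Or.inl ⟨a₁, ha₁, fun x hx => ⟨hs₁ hx, hs₂ ⟨lt_of_le_of_lt h hx.1, hx.2⟩⟩⟩
    · exact Or.inl ⟨a₁, ha₁, fun x hx => ⟨hs₁ hx, hs₂ hx.2⟩⟩
    · exact Or.inl ⟨a₂, ha₂, fun x hx => ⟨hs₁ hx.2, hs₂ hx⟩⟩
    · exact Or.inr fun x hx => ⟨hs₁ hx, hs₂ hx⟩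
  | sUnion S hS ih =>
    intro ht
    obtain ⟨s, hsS, hts⟩ := ht
    rcases ih s hsS hts with ⟨a, ha, h⟩ | h
    · exact Or.inl ⟨a, ha, fun x hx => ⟨s, hsS, h hx⟩⟩
    · exact Or.inr fun x hx => ⟨s, hsS, h hx⟩

lemma nhds_cases {t : T} {s : Set T} (hs : s ∈ 𝓝 t) :
    (∃ a, a < t ∧ Set.Ioc a t ⊆ s) ∨ Set.Iic t ⊆ s := by
  obtain ⟨O, hOs, hO, htO⟩ := mem_nhds_iff.1 hs
  rcases genOpen_cases t (isOpen_iff_gen.1 hO) htO with ⟨a, ha, h⟩ | h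
  · exact Or.inl ⟨a, ha, h.trans hOs⟩
  · exact Or.inr (h.trans hOs)

lemma Ioc_mem_nhds' {a t : T} (h : a < t) : Set.Ioc a t ∈ 𝓝 t :=
  (isOpen_Ioc' a t).mem_nhds ⟨h, le_rfl⟩

lemma Iic_mem_nhds' (t : T) : Set.Iic t ∈ 𝓝 t :=
  (isOpen_Iic' t).mem_nhds le_rfl

lemma exists_isLUB_of_chain {C : Set T} (hne : C.Nonempty) (hbdd : BddAbove C) :
    ∃ m, IsLUB C m := by
  obtain ⟨b, hb⟩ := hbdd
  set S : Set T := {x | x ≤ b ∧ ∀ c ∈ C, c ≤ x} with hS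
  have hSwf : S.IsWF := (isWF_Iic b).mono fun x hx => hx.1
  have hSne : S.Nonempty := ⟨b, le_rfl, fun c hc => hb hc⟩
  refine ⟨hSwf.min hSne, fun c hc => (hSwf.min_mem hSne).2 c hc, ?_⟩
  intro u hu
  have hub : u ⊓ b ∈ S := ⟨inf_le_right, fun c hc => le_inf (hu hc) (hb hc)⟩
  have hnl := hSwf.not_lt_min hSne hub
  rcases comp_of_le (hSwf.min_mem hSne).1 (hub.1 : u ⊓ b ≤ b) with h | h
  · exact h.trans inf_le_left
  · rcases h.lt_or_eq with h' | h'
    · exact absurd h' hnl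
    · exact h'.symm.le.trans inf_le_left

lemma isCompact_Iic'' (m : T) : IsCompact (Set.Iic m) := by
  rw [isCompact_iff_ultrafilter_le_nhds]
  intro F hF
  rw [Filter.le_principal_iff] at hF
  set P : Set T := {x | x ≤ m ∧ Set.Iic x ∈ F} with hP
  have hPwf : P.IsWF := (isWF_Iic m).mono fun x hx => hx.1
  have hPne : P.Nonempty := ⟨m, le_rfl, hF⟩
  refine ⟨hPwf.min hPne, (hPwf.min_mem hPne).1, ?_⟩
  intro s hs
  rcases nhds_cases hs with ⟨a, hat, hsub⟩ | hsub
  · have hIat : Set.Iic (hPwf.min hPne) ∈ F := (hPwf.min_mem hPne).2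
    have hIa : Set.Iic a ∉ F := fun h =>
      hPwf.not_lt_min hPne ⟨hat.le.trans (hPwf.min_mem hPne).1, h⟩ hat
    have hcompl : (Set.Iic a)ᶜ ∈ F := Ultrafilter.compl_mem_iff_notMem.2 hIa
    refine Filter.mem_of_superset (Filter.inter_mem hIat hcompl) ?_
    rintro y ⟨hyt, hya⟩
    refine hsub ⟨?_, hyt⟩
    rcases comp_of_le hat.le (hyt : y ≤ hPwf.min hPne) with h | h
    · exact h.lt_of_ne fun he => hya he.ge
    · exact absurd h hya
  · exact Filter.mem_of_superset (hPwf.min_mem hPne).2 hsub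

lemma exists_cofinal_seq {C : Set T} (hC : IsChain (· ≤ ·) C) (hne : C.Nonempty)
    (hnomax : ∀ c ∈ C, ∃ c' ∈ C, c < c') :
    ∃ lam : Cardinal.{u}, lam.IsRegular ∧ ∃ F : lam.ord.ToType → T, StrictMono F ∧
      (∀ a, F a ∈ C) ∧ (∀ c ∈ C, ∃ a, c ≤ F a) := by
  classical
  letI rC : ↥C → ↥C → Prop := fun a b => (a : T) < b
  haveI htr : IsTrans ↥C rC := ⟨fun a b c hab hbc => lt_trans hab hbc⟩
  haveI htc : IsTrichotomous ↥C rC := ⟨fun a b hab' hba' => by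
    rcases eq_or_ne a b with rfl | hab
    · rfl
    · have hval : (a : T) ≠ b := fun h => hab (Subtype.ext h)
      rcases hC a.2 b.2 hval with h | h
      · exact absurd (h.lt_of_ne hval) hab'
      · exact absurd (h.lt_of_ne hval.symm) hba'⟩
  haveI hwf : IsWellFounded ↥C rC := ⟨by
    have hWF : C.IsWF := by
      rw [Set.isWF_iff_no_descending_seq]
      intro f hf hmem
      exact Set.isWF_iff_no_descending_seq.1 (TreeOrder.isWF_lt (f 0))
        (fun n => f (n + 1)) (fun m n h => hf (by omega))
        (fun n => hf (Nat.succ_pos n))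
    exact hWF⟩
  haveI : IsWellOrder ↥C rC := { }
  set o := Ordinal.type rC with ho
  have holim : Order.IsSuccLimit o := by
    rw [Ordinal.isSuccLimit_iff, Order.isSuccPrelimit_iff_succ_lt]
    constructor
    · rw [ho, Ordinal.type_ne_zero_iff_nonempty]
      exact hne.to_subtype
    · intro a ha
      obtain ⟨x, rfl⟩ := Ordinal.typein_surj rC ha
      obtain ⟨c', hc', hlt⟩ := hnomax x.1 x.2
      have hts : Ordinal.typein rC x < Ordinal.typein rC ⟨c', hc'⟩ :=
        (Ordinal.typein_lt_typein rC).2 hlt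
      exact lt_of_le_of_lt (Order.succ_le_of_lt hts) (Ordinal.typein_lt_type rC _)
  refine ⟨o.cof, Cardinal.isRegular_cof holim, ?_⟩
  obtain ⟨fs, hfs⟩ := Ordinal.exists_fundamental_sequence o
  have hval : ∀ j : Set.Iio o.cof.ord, fs j.1 j.2 < o := by
    intro j
    have h := Ordinal.lt_blsub (o := o.cof.ord) fs j.1 j.2
    rwa [hfs.2.2] at h
  set G : Set.Iio o.cof.ord → ↥C := fun j => Ordinal.enum rC ⟨fs j.1 j.2, hval j⟩ with hG
  have hGmono : ∀ j j' : Set.Iio o.cof.ord, j < j' → rC (G j) (G j') := by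
    intro j j' hjj
    exact Ordinal.enum_lt_enum (r := rC).2 (Subtype.mk_lt_mk.2 (hfs.2.1 j.2 j'.2 hjj))
  set e : o.cof.ord.ToType ≃o Set.Iio o.cof.ord := (Ordinal.ToType.mk (o := o.cof.ord)).symm
    with he
  refine ⟨fun x => (G (e x) : T), ?_, fun x => (G (e x)).2, ?_⟩
  · intro x y hxy
    exact hGmono _ _ (e.lt_iff_lt.2 hxy)
  · intro c hc
    have hβ : Ordinal.typein rC ⟨c, hc⟩ < o := Ordinal.typein_lt_type rC _
    rw [← hfs.2.2] at hβ
    obtain ⟨i, hi, hle⟩ := Ordinal.lt_blsub_iff.1 hβ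
    refine ⟨Ordinal.ToType.mk (o := o.cof.ord) ⟨i, hi⟩, ?_⟩
    have hex : e (Ordinal.ToType.mk (o := o.cof.ord) ⟨i, hi⟩) = ⟨i, hi⟩ := by
      rw [he]
      exact (Ordinal.ToType.mk (o := o.cof.ord)).symm_apply_apply _
    show c ≤ (G (e (Ordinal.ToType.mk (o := o.cof.ord) ⟨i, hi⟩)) : T)
    rw [hex]
    have henum : Ordinal.enum rC ⟨Ordinal.typein rC ⟨c, hc⟩, Ordinal.typein_lt_type rC _⟩
        = ⟨c, hc⟩ := Ordinal.enum_typein rC ⟨c, hc⟩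
    rcases lt_or_eq_of_le hle with hlt | heq
    · have h4 : rC (⟨c, hc⟩ : ↥C) (G ⟨i, hi⟩) := by
        rw [← henum]
        exact Ordinal.enum_lt_enum (r := rC).2 (Subtype.mk_lt_mk.2 hlt)
      exact le_of_lt h4
    · have h5 : (⟨Ordinal.typein rC ⟨c, hc⟩, Ordinal.typein_lt_type rC _⟩ :
          {o' // o' < Ordinal.type rC}) = ⟨fs i hi, hval ⟨i, hi⟩⟩ := Subtype.ext heq
      have h6 : (⟨c, hc⟩ : ↥C) = G ⟨i, hi⟩ := by
        rw [← henum, hG]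
        exact congrArg (Ordinal.enum rC) h5
      exact le_of_eq (congrArg Subtype.val h6)

lemma nonempty_toType {lam : Cardinal.{u}} (hreg : lam.IsRegular) :
    Nonempty lam.ord.ToType :=
  Ordinal.nonempty_toType_iff.2 (by
    simp only [ne_eq, Cardinal.ord_eq_zero]
    exact (Cardinal.aleph0_pos.trans_le hreg.aleph0_le).ne')

lemma exists_cluster {ι : Type*} [SemilatticeSup ι] [Nonempty ι] {f : ι → T} {K : Set T}
    (hK : IsCompact K) (hfreq : ∃ᶠ i in atTop, f i ∈ K) :
    ∃ x ∈ K, ∀ i, ∃ j, i ≤ j ∧ f j ≤ x := by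
  haveI : (atTop : Filter ι).NeBot := Filter.atTop_neBot
  have hne : (Filter.map f atTop ⊓ 𝓟 K).NeBot := by
    rw [Filter.inf_principal_neBot_iff]
    intro U hU
    have hU' : ∀ᶠ i in atTop, f i ∈ U := Filter.mem_map.1 hU
    obtain ⟨i, h1, h2⟩ := (hfreq.and_eventually hU').exists
    exact ⟨f i, h2, h1⟩
  obtain ⟨x, hxK, hx⟩ := hK (f := Filter.map f atTop ⊓ 𝓟 K) inf_le_right
  refine ⟨x, hxK, fun i => ?_⟩
  haveI : (𝓝 x ⊓ (Filter.map f atTop ⊓ 𝓟 K)).NeBot := hx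
  have h1 : Set.Iic x ∈ 𝓝 x ⊓ (Filter.map f atTop ⊓ 𝓟 K) :=
    Filter.mem_inf_of_left (Iic_mem_nhds' x)
  have h2 : f '' Set.Ici i ∈ 𝓝 x ⊓ (Filter.map f atTop ⊓ 𝓟 K) :=
    Filter.mem_inf_of_right (Filter.mem_inf_of_left (Filter.image_mem_map (Filter.Ici_mem_atTop i)))
  obtain ⟨y, hy1, j, hj, rfl⟩ := Filter.nonempty_of_mem (Filter.inter_mem h1 h2)
  exact ⟨j, hj, hy1⟩

lemma tendsto_of_isLUB {ι : Type*} [Preorder ι] {f : ι → T} (hmono : Monotone f) {t : T}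
    (hlub : IsLUB (Set.range f) t) : Filter.Tendsto f Filter.atTop (𝓝 t) := by
  intro s hs
  rw [Filter.mem_map]
  rcases nhds_cases hs with ⟨a, hat, hsub⟩ | hsub
  · have hnub : ¬ a ∈ upperBounds (Set.range f) := fun h => absurd (hlub.2 h) (not_le_of_gt hat)
    have h2 : ∃ α, ¬ f α ≤ a := by
      by_contra h
      push_neg at h
      exact hnub fun y hy => by obtain ⟨α, rfl⟩ := hy; exact h α
    obtain ⟨α, hα⟩ := h2
    filter_upwards [Filter.Ici_mem_atTop α] with β hβ
    have hft : f β ≤ t := hlub.1 ⟨β, rfl⟩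
    have hβa : ¬ f β ≤ a := fun h => hα ((hmono hβ).trans h)
    refine hsub ⟨?_, hft⟩
    rcases comp_of_le hat.le hft with h | h
    · exact h.lt_of_ne fun he => hβa he.ge
    · exact absurd h hβa
  · filter_upwards with β using hsub (hlub.1 ⟨β, rfl⟩)

lemma mem_image_coe_iff {s : Set T} {x : T} :
    ((x : OnePoint T) ∈ ((↑) : T → OnePoint T) '' s ∪ {OnePoint.infty}) ↔ x ∈ s := by
  constructor
  · rintro (⟨y, hy, he⟩ | h)
    · rwa [← OnePoint.coe_injective he]
    · exact absurd (Set.mem_singleton_iff.1 h) (OnePoint.coe_ne_infty x)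
  · exact fun h => Or.inl ⟨x, h, rfl⟩

section Main

variable {X : Type v} [TopologicalSpace X] (g : OnePoint T → X)

lemma backward_cont_coe
    (h1 : ∀ lam : Cardinal.{u}, lam.IsRegular → ∀ f : lam.ord.ToType → T, StrictMono f →
        (∀ t : T, IsLUB (Set.range f) t →
          Filter.Tendsto (fun a => g (f a : OnePoint T)) Filter.atTop
            (nhds (g (t : OnePoint T)))) ∧
        (¬ BddAbove (Set.range f) →
          Filter.Tendsto (fun a => g (f a : OnePoint T)) Filter.atTop
            (nhds (g OnePoint.infty)))) :
    Continuous (fun x : T => g ↑x) := by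
  rw [continuous_iff_continuousAt]
  intro t V hV
  rw [Filter.mem_map]
  obtain ⟨U, hUV, hUopen, hgU⟩ := mem_nhds_iff.1 hV
  suffices h : (fun x : T => g ↑x) ⁻¹' U ∈ 𝓝 t from
    Filter.mem_of_superset h (Set.preimage_mono hUV)
  by_cases hgood : ∃ a, a < t ∧ ∀ x ∈ Set.Ioc a t, g ↑x ∈ U
  · obtain ⟨a, ha, hg'⟩ := hgood
    exact Filter.mem_of_superset (Ioc_mem_nhds' ha) hg'
  by_cases hbot : ∀ x : T, ¬ x < t
  · refine Filter.mem_of_superset (Iic_mem_nhds' t) fun x hx => ?_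
    rcases hx.lt_or_eq with h | h
    · exact absurd h (hbot x)
    · simpa [h] using hgU
  push_neg at hgood hbot
  exfalso
  set B : Set T := {x | x < t ∧ g ↑x ∉ U} with hB
  have hcof : ∀ a, a < t → ∃ x ∈ B, a < x := by
    intro a ha
    obtain ⟨x, hx, hgx⟩ := hgood a ha
    have hxt : x < t := lt_of_le_of_ne hx.2 (fun he => hgx (by rw [he]; exact hgU))
    exact ⟨x, ⟨hxt, hgx⟩, hx.1⟩
  obtain ⟨x₀, hx₀⟩ := hbot
  have hBne : B.Nonempty := (hcof x₀ hx₀).imp fun x hx => hx.1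
  have hBchain : IsChain (· ≤ ·) B := (TreeOrder.chain_lt t).mono fun x hx => hx.1
  have hBnomax : ∀ c ∈ B, ∃ c' ∈ B, c < c' := fun c hc => hcof c hc.1
  obtain ⟨lam, hreg, F, hFmono, hFmem, hFcof⟩ := exists_cofinal_seq hBchain hBne hBnomax
  have hlub : IsLUB (Set.range F) t := by
    constructor
    · rintro y ⟨a, rfl⟩
      exact (hFmem a).1.le
    · intro u hu
      by_contra hnt
      have hw : t ⊓ u < t := lt_of_le_of_ne inf_le_left
        (fun he => hnt (by rw [← he]; exact inf_le_right))
      obtain ⟨x, hxB, hwx⟩ := hcof _ hw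
      obtain ⟨a, hxa⟩ := hFcof x hxB
      have hFa : F a ≤ t ⊓ u := le_inf (hFmem a).1.le (hu ⟨a, rfl⟩)
      exact absurd (lt_of_lt_of_le hwx (hxa.trans hFa)) (lt_irrefl _)
  haveI := nonempty_toType hreg
  haveI : (atTop : Filter lam.ord.ToType).NeBot := Filter.atTop_neBot
  have htend := (h1 lam hreg F hFmono).1 t hlub
  have hev : ∀ᶠ a in Filter.atTop, g ↑(F a) ∈ U := htend (hUopen.mem_nhds hgU)
  obtain ⟨a, ha⟩ := hev.exists
  exact (hFmem a).2 ha

lemma compact_of_conditions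
    (h1 : ∀ lam : Cardinal.{u}, lam.IsRegular → ∀ f : lam.ord.ToType → T, StrictMono f →
        (∀ t : T, IsLUB (Set.range f) t →
          Filter.Tendsto (fun a => g (f a : OnePoint T)) Filter.atTop
            (nhds (g (t : OnePoint T)))) ∧
        (¬ BddAbove (Set.range f) →
          Filter.Tendsto (fun a => g (f a : OnePoint T)) Filter.atTop
            (nhds (g OnePoint.infty))))
    (h2 : ∀ f : ℕ → T, (∀ m n : ℕ, m ≠ n → ¬ f m ≤ f n) →
        Filter.Tendsto (fun n => g (f n : OnePoint T)) Filter.atTop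
          (nhds (g OnePoint.infty)))
    {U : Set X} (hUopen : IsOpen U) (hgU : g OnePoint.infty ∈ U)
    (hcont : Continuous (fun x : T => g ↑x)) :
    IsCompact ((fun x : T => g ↑x) ⁻¹' Uᶜ) := by
  set K : Set T := (fun x : T => g ↑x) ⁻¹' Uᶜ with hK
  have hKclosed : IsClosed K := (isClosed_compl_iff.2 hUopen).preimage hcont
  have hanti : ∀ A : Set T, A ⊆ K → (A.Pairwise fun a b => ¬ a ≤ b) → A.Finite := by
    intro A hAK hpair
    by_contra hinf
    have hinf' : A.Infinite := hinf
    let e := Set.Infinite.natEmbedding A hinf'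
    have h' : ∀ m n : ℕ, m ≠ n → ¬ ((e m : T) ≤ (e n : T)) := by
      intro m n hmn
      have hvne : ((e m : ↥A) : T) ≠ ((e n : ↥A) : T) :=
        fun h => hmn (e.injective (Subtype.ext h))
      exact hpair (e m).2 (e n).2 hvne
    have htend := h2 (fun n => (e n : T)) h'
    have hev : ∀ᶠ n in Filter.atTop, g ↑((e n : T)) ∈ U := htend (hUopen.mem_nhds hgU)
    obtain ⟨n, hn⟩ := hev.exists
    exact hAK (e n).2 hn
  have hchainK : ∀ c ⊆ K, IsChain (· ≤ ·) c → ∀ y ∈ c, ∃ ub ∈ K, ∀ z ∈ c, z ≤ ub := by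
    intro c hcK hchain y hy
    by_cases hmax : ∃ m ∈ c, ∀ z ∈ c, z ≤ m
    · obtain ⟨m, hm, hub⟩ := hmax
      exact ⟨m, hcK hm, hub⟩
    push_neg at hmax
    have hnomax : ∀ a ∈ c, ∃ b ∈ c, a < b := by
      intro a ha
      obtain ⟨z, hz, hza⟩ := hmax a ha
      have hne : a ≠ z := fun he => hza (he ▸ le_rfl)
      rcases hchain ha hz hne with h | h
      · exact ⟨z, hz, h.lt_of_ne hne⟩
      · exact absurd h hza
    obtain ⟨lam, hreg, F, hFmono, hFmem, hFcof⟩ := exists_cofinal_seq hchain ⟨y, hy⟩ hnomax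
    haveI := nonempty_toType hreg
    haveI : (atTop : Filter lam.ord.ToType).NeBot := Filter.atTop_neBot
    have hbdd : BddAbove c := by
      by_contra hnb
      have hnb' : ¬ BddAbove (Set.range F) := by
        rintro ⟨u, hu⟩
        exact hnb ⟨u, fun z hz => by
          obtain ⟨a, hza⟩ := hFcof z hz
          exact hza.trans (hu ⟨a, rfl⟩)⟩
      have hev : ∀ᶠ a in Filter.atTop, g ↑(F a) ∈ U :=
        ((h1 lam hreg F hFmono).2 hnb') (hUopen.mem_nhds hgU)
      obtain ⟨a, ha⟩ := hev.exists
      exact hcK (hFmem a) ha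
    obtain ⟨t, hlub⟩ := exists_isLUB_of_chain ⟨y, hy⟩ hbdd
    have htK : t ∈ K := by
      have hcl : t ∈ closure K := by
        rw [mem_closure_iff]
        intro O hO htO
        rcases nhds_cases (hO.mem_nhds htO) with ⟨a, hat, hsub⟩ | hsub
        · have hnub : ¬ a ∈ upperBounds c := fun h => absurd (hlub.2 h) (not_le_of_gt hat)
          have hex : ∃ z ∈ c, ¬ z ≤ a := by
            by_contra h
            push_neg at h
            exact hnub fun z hz => h z hz
          obtain ⟨z, hz, hza⟩ := hex
          have hzt : z ≤ t := hlub.1 hz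
          have haz : a < z := by
            rcases comp_of_le hat.le hzt with h | h
            · exact h.lt_of_ne fun he => hza he.ge
            · exact absurd h hza
          exact ⟨z, hsub ⟨haz, hzt⟩, hcK hz⟩
        · exact ⟨y, hsub (hlub.1 hy), hcK hy⟩
      rwa [hKclosed.closure_eq] at hcl
    exact ⟨t, htK, fun z hz => hlub.1 hz⟩
  have hzorn : ∀ x ∈ K, ∃ m, x ≤ m ∧ Maximal (· ∈ K) m := fun x hx =>
    zorn_le_nonempty₀ K (fun c hc hchain y hy => hchainK c hc hchain y hy) x hx
  set M : Set T := {m : T | Maximal (· ∈ K) m} with hM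
  have hMfin : M.Finite := by
    refine hanti M (fun m hm => hm.1) ?_
    intro m hm m' hm' hne hle
    exact hne (le_antisymm hle (hm.2 hm'.1 hle))
  have hcover : K = ⋃ m ∈ M, Set.Iic m ∩ K := by
    apply Set.Subset.antisymm
    · intro x hx
      obtain ⟨m, hxm, hmax⟩ := hzorn x hx
      exact Set.mem_biUnion hmax ⟨hxm, hx⟩
    · intro x hx
      simp only [Set.mem_iUnion] at hx
      obtain ⟨m, hm, _, hxK⟩ := hx
      exact hxK
  rw [hcover]
  exact hMfin.isCompact_biUnion fun m _ => (isCompact_Iic'' m).inter_right hKclosed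

end Main

end TreeProofAux

open TreeProofAux in
/-- A map on the one-point compactification of a tree is continuous if and only if
(1) it preserves limits of strictly increasing transfinite sequences (of regular
infinite length), where an unbounded sequence converges to `∞`, and (2) it sends
every infinite antichain to a sequence converging to the value at `∞`. -/
theorem continuous_iff_of_tree {T : Type u} [TreeOrder T] {X : Type v} [TopologicalSpace X]
    (g : OnePoint T → X) :
    Continuous g ↔
      ((∀ lam : Cardinal.{u}, lam.IsRegular → ∀ f : lam.ord.ToType → T, StrictMono f →
          (∀ t : T, IsLUB (Set.range f) t →
            Filter.Tendsto (fun a => g (f a : OnePoint T)) Filter.atTop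
              (nhds (g (t : OnePoint T)))) ∧
          (¬ BddAbove (Set.range f) →
            Filter.Tendsto (fun a => g (f a : OnePoint T)) Filter.atTop
              (nhds (g OnePoint.infty)))) ∧
        (∀ f : ℕ → T, (∀ m n : ℕ, m ≠ n → ¬ f m ≤ f n) →
          Filter.Tendsto (fun n => g (f n : OnePoint T)) Filter.atTop
            (nhds (g OnePoint.infty)))) := by
  constructor
  · intro hg
    constructor
    · intro lam hreg f hmono
      constructor
      · intro t hlub
        have ht : Filter.Tendsto f Filter.atTop (𝓝 t) := tendsto_of_isLUB hmono.monotone hlub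
        have h2 : Filter.Tendsto (fun a => (f a : OnePoint T)) Filter.atTop
            (𝓝 (t : OnePoint T)) := (OnePoint.continuous_coe.tendsto t).comp ht
        exact (hg.tendsto _).comp h2
      · intro hnb
        have hinf : Filter.Tendsto (fun a => (f a : OnePoint T)) Filter.atTop
            (𝓝 OnePoint.infty) := by
          rw [OnePoint.hasBasis_nhds_infty.tendsto_right_iff]
          rintro K ⟨hKcl, hKcp⟩
          haveI := nonempty_toType hreg
          haveI : (atTop : Filter lam.ord.ToType).NeBot := Filter.atTop_neBot
          by_contra hcon
          have hfreq : ∃ᶠ a in Filter.atTop, f a ∈ K := by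
            rw [Filter.not_eventually] at hcon
            refine hcon.mono fun a ha => ?_
            by_contra hKa
            exact ha (mem_image_coe_iff.2 hKa)
          obtain ⟨x, _, hx⟩ := exists_cluster hKcp hfreq
          apply hnb
          refine ⟨x, ?_⟩
          rintro y ⟨a, rfl⟩
          obtain ⟨j, haj, hjx⟩ := hx a
          exact (hmono.monotone haj).trans hjx
        exact (hg.tendsto _).comp hinf
    · intro f hanti
      have hinf : Filter.Tendsto (fun n => (f n : OnePoint T)) Filter.atTop
          (𝓝 OnePoint.infty) := by
        rw [OnePoint.hasBasis_nhds_infty.tendsto_right_iff]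
        rintro K ⟨hKcl, hKcp⟩
        by_contra hcon
        have hfreq : ∃ᶠ n in Filter.atTop, f n ∈ K := by
          rw [Filter.not_eventually] at hcon
          refine hcon.mono fun n hn => ?_
          by_contra hKn
          exact hn (mem_image_coe_iff.2 hKn)
        obtain ⟨x, _, hx⟩ := exists_cluster hKcp hfreq
        obtain ⟨j₁, _, hj₁⟩ := hx 0
        obtain ⟨j₂, hj₂ge, hj₂⟩ := hx (j₁ + 1)
        have hne : j₁ ≠ j₂ := by omega
        rcases comp_of_le hj₁ hj₂ with h | h
        · exact hanti j₁ j₂ hne h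
        · exact hanti j₂ j₁ hne.symm h
      exact (hg.tendsto _).comp hinf
  · rintro ⟨h1, h2⟩
    rw [OnePoint.continuous_iff]
    have hcont := backward_cont_coe g h1
    refine ⟨?_, hcont⟩
    intro V hV
    rw [Filter.mem_map]
    obtain ⟨U, hUV, hUopen, hgU⟩ := mem_nhds_iff.1 hV
    suffices h : (fun x : T => g ↑x) ⁻¹' U ∈ Filter.coclosedCompact T from
      Filter.mem_of_superset h (Set.preimage_mono hUV)
    simp only [Filter.hasBasis_coclosedCompact.mem_iff, and_assoc]
    refine ⟨(fun x : T => g ↑x) ⁻¹' Uᶜ,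
      (isClosed_compl_iff.2 hUopen).preimage hcont,
      compact_of_conditions g h1 h2 hUopen hgU hcont, ?_⟩
    intro y hy
    simp only [Set.mem_compl_iff, Set.mem_preimage, Set.mem_compl_iff, not_not] at hy ⊢
    exact hy
end

section
/- Let {A_t : t ∈ T} be a tree of sets indexed by a tree T, with all A_t contained in a fixed set X. Then the map f: A(T) → P(X), defined by f(t) = A_t for t ∈ T and f(∞) = ∅, is continuous, where the power set P(X) is identified with the Cantor cube 2^X (sets identified with their characteristic functions). -/
open Filter Topology Set

universe u v

/-- A tree of sets indexed by a tree `T`. -/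
structure IsTreeOfSets {T : Type u} [PartialOrder T] {X : Type v} (A : T → Set X) : Prop where
  subset_of_le : ∀ s t : T, t ≤ s → A s ⊆ A t
  disjoint_of_incomp : ∀ s t : T, ¬ s ≤ t → ¬ t ≤ s → A s ∩ A t = ∅
  iInter_chain : ∀ C : Set T, C.Nonempty → IsChain (· ≤ ·) C → ∀ t : T, IsLUB C t →
    ⋂ s ∈ C, A s = A t
  iInter_unbounded : ∀ C : Set T, C.Nonempty → IsChain (· ≤ ·) C → ¬ BddAbove C →
    ⋂ s ∈ C, A s = ∅

/-- The map sending `t ∈ T` to the characteristic function of `A t` (an element of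
the Cantor cube `2^X`) and `∞` to the characteristic function of `∅`. -/
noncomputable def treeSetsChar {T : Type u} {X : Type v} (A : T → Set X) :
    OnePoint T → X → Bool :=
  fun p x => @decide (∃ t : T, p = (t : OnePoint T) ∧ x ∈ A t) (Classical.propDecidable _)

section Aux

variable {T : Type u} [TreeOrder T]

lemma TreeOrder.chain_Iic (m : T) : IsChain (· ≤ ·) (Set.Iic m) := by
  intro a ha b hb hab
  rcases eq_or_lt_of_le (ha : a ≤ m) with rfl | ha'
  · exact Or.inr hb
  rcases eq_or_lt_of_le (hb : b ≤ m) with rfl | hb'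
  · exact Or.inl ha
  exact TreeOrder.chain_lt m ha' hb' hab

lemma TreeOrder.isOpen_Iic' (b : T) : IsOpen (Set.Iic b) :=
  TopologicalSpace.GenerateOpen.basic _ (Or.inr ⟨b, rfl⟩)

lemma TreeOrder.isOpen_Ioc' (a b : T) : IsOpen (Set.Ioc a b) :=
  TopologicalSpace.GenerateOpen.basic _ (Or.inl ⟨a, b, rfl⟩)

lemma TreeOrder.isClosed_Iic' (m : T) : IsClosed (Set.Iic m) := by
  rw [← isOpen_compl_iff, isOpen_iff_forall_mem_open]
  intro t ht
  refine ⟨Set.Ioc (t ⊓ m) t, ?_, TreeOrder.isOpen_Ioc' _ _, ?_, le_refl t⟩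
  · intro y hy hy'
    exact absurd (le_inf hy.2 hy') (not_le_of_gt hy.1)
  · refine lt_of_le_of_ne inf_le_left (fun h => ht ?_)
    have : t ≤ t ⊓ m := h.ge
    exact le_trans this inf_le_right

lemma TreeOrder.nhds_aux {U : Set T} (hU : IsOpen U) :
    ∀ m ∈ U, Set.Iic m ⊆ U ∨ ∃ a, a < m ∧ Set.Ioc a m ⊆ U := by
  have hU' : TopologicalSpace.GenerateOpen
      ({S : Set T | ∃ a b : T, S = Set.Ioc a b} ∪ {S : Set T | ∃ b : T, S = Set.Iic b}) U := hU
  clear hU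
  induction hU' with
  | basic s hs =>
    intro m hm
    rcases hs with ⟨a, b, rfl⟩ | ⟨b, rfl⟩
    · exact Or.inr ⟨a, hm.1, fun y hy => ⟨hy.1, le_trans hy.2 hm.2⟩⟩
    · exact Or.inl (fun y hy => le_trans hy hm)
  | univ => exact fun m _ => Or.inl (fun y _ => trivial)
  | inter s t hs ht ihs iht =>
    intro m hm
    rcases ihs m hm.1 with h1 | ⟨a, ha, h1⟩
    · rcases iht m hm.2 with h2 | ⟨b, hb, h2⟩
      · exact Or.inl (fun y hy => ⟨h1 hy, h2 hy⟩)
      · exact Or.inr ⟨b, hb, fun y hy => ⟨h1 hy.2, h2 hy⟩⟩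
    · rcases iht m hm.2 with h2 | ⟨b, hb, h2⟩
      · exact Or.inr ⟨a, ha, fun y hy => ⟨h1 hy, h2 hy.2⟩⟩
      · have hab : a ≤ b ∨ b ≤ a := by
          by_cases h : a = b
          · exact Or.inl h.le
          · exact TreeOrder.chain_lt m ha hb h
        rcases hab with h | h
        · exact Or.inr ⟨b, hb, fun y hy =>
            ⟨h1 ⟨lt_of_le_of_lt h hy.1, hy.2⟩, h2 hy⟩⟩
        · exact Or.inr ⟨a, ha, fun y hy =>
            ⟨h1 hy, h2 ⟨lt_of_le_of_lt h hy.1, hy.2⟩⟩⟩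
  | sUnion S hS ih =>
    intro m hm
    obtain ⟨s, hsS, hms⟩ := hm
    rcases ih s hsS m hms with h | ⟨a, ha, h⟩
    · exact Or.inl (h.trans (Set.subset_sUnion_of_mem hsS))
    · exact Or.inr ⟨a, ha, h.trans (Set.subset_sUnion_of_mem hsS)⟩

lemma TreeOrder.isCompact_Iic' (m₀ : T) : IsCompact (Set.Iic m₀) := by
  have hWF : (Set.Iic m₀).WellFoundedOn (· < ·) := by
    have h1 : Set.IsWF {x : T | x < m₀} := TreeOrder.isWF_lt m₀
    have he : Set.Iic m₀ = insert m₀ {x : T | x < m₀} := by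
      ext y
      simp only [Set.mem_Iic, Set.mem_insert_iff, Set.mem_setOf_eq]
      constructor
      · intro h; rcases eq_or_lt_of_le h with rfl | h'
        · exact Or.inl rfl
        · exact Or.inr h'
      · rintro (rfl | h); exacts [le_refl _, le_of_lt h]
    rw [he]
    exact h1.insert m₀
  have key : ∀ m ∈ Set.Iic m₀, IsCompact (Set.Iic m) := by
    intro m hm
    refine Set.WellFoundedOn.induction (P := fun z => IsCompact (Set.Iic z)) hWF hm ?_
    intro y hy ih
    apply isCompact_of_finite_subcover
    intro ι U hUo hcov
    classical
    obtain ⟨i₀, hi₀⟩ := Set.mem_iUnion.mp (hcov (le_refl y))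
    rcases TreeOrder.nhds_aux (hUo i₀) y hi₀ with h | ⟨a, ha, h⟩
    · exact ⟨{i₀}, fun z hz =>
        Set.mem_iUnion₂.mpr ⟨i₀, Finset.mem_singleton_self i₀, h hz⟩⟩
    · have hcomp : IsCompact (Set.Iic a) := ih a (le_trans ha.le hy) ha
      obtain ⟨t, ht⟩ := hcomp.elim_finite_subcover U hUo (fun z hz => hcov (le_trans hz ha.le))
      refine ⟨insert i₀ t, fun z hz => ?_⟩
      by_cases hza : z ≤ a
      · obtain ⟨i, hi, hzi⟩ := Set.mem_iUnion₂.mp (ht hza)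
        exact Set.mem_iUnion₂.mpr ⟨i, Finset.mem_insert_of_mem hi, hzi⟩
      · have haz : a < z := by
          rcases eq_or_lt_of_le (hz : z ≤ y) with rfl | hzy
          · exact ha
          · have hne : a ≠ z := fun h' => hza h'.ge
            rcases TreeOrder.chain_lt y ha hzy hne with h' | h'
            · exact lt_of_le_of_ne h' hne
            · exact absurd h' hza
        exact Set.mem_iUnion₂.mpr ⟨i₀, Finset.mem_insert_self _ _, h ⟨haz, hz⟩⟩
  exact key m₀ (le_refl m₀)

end Aux

/-- For a tree of sets `{A_t : t ∈ T}`, the map `t ↦ A_t`, `∞ ↦ ∅`, from `A(T)` to the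
Cantor cube `2^X`, is continuous. -/
theorem continuous_treeSetsChar {T : Type u} [TreeOrder T] {X : Type v} (A : T → Set X)
    (hA : IsTreeOfSets A) : Continuous (treeSetsChar A) := by
  rw [continuous_pi_iff]
  intro x
  set S : Set (OnePoint T) := {p : OnePoint T | ∃ t : T, p = (t : OnePoint T) ∧ x ∈ A t} with hS
  have heq : (fun p => treeSetsChar A p x) = S.boolIndicator := by
    funext p
    by_cases h : ∃ t : T, p = (t : OnePoint T) ∧ x ∈ A t
    · have h' : p ∈ S := h
      simp [treeSetsChar, Set.boolIndicator, h, h']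
    · have h' : p ∉ S := h
      simp [treeSetsChar, Set.boolIndicator, h, h']
  rw [heq, continuous_boolIndicator_iff_isClopen]
  set B : Set T := {t : T | x ∈ A t} with hB
  have hSim : S = (↑) '' B := by
    ext p
    constructor
    · rintro ⟨t, rfl, ht⟩; exact ⟨t, ht, rfl⟩
    · rintro ⟨t, ht, rfl⟩; exact ⟨t, rfl, ht⟩
  by_cases hBne : B.Nonempty
  · -- B is a chain
    have hchain : IsChain (· ≤ ·) B := by
      intro s hs t ht hst
      by_contra hc
      push_neg at hc
      have := hA.disjoint_of_incomp s t (fun h => hc.1 h) (fun h => hc.2 h)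
      exact Set.eq_empty_iff_forall_notMem.mp this x ⟨hs, ht⟩
    have hxmem : x ∈ ⋂ s ∈ B, A s := Set.mem_iInter₂.mpr (fun s hs => hs)
    have hbdd : BddAbove B := by
      by_contra hub
      rw [hA.iInter_unbounded B hBne hchain hub] at hxmem
      exact hxmem
    obtain ⟨b, hb⟩ := hbdd
    set UB : Set T := {u : T | u ≤ b ∧ ∀ s ∈ B, s ≤ u} with hUB
    have hUBwf : UB.IsWF := by
      apply Set.IsWF.mono ((TreeOrder.isWF_lt b).insert b)
      intro u hu
      rcases eq_or_lt_of_le hu.1 with rfl | h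
      · exact Set.mem_insert _ _
      · exact Set.mem_insert_of_mem _ h
    have hUBne : UB.Nonempty := ⟨b, le_refl b, fun s hs => hb hs⟩
    set m : T := hUBwf.min hUBne with hm
    have hmUB : m ∈ UB := hUBwf.min_mem hUBne
    have hlub : IsLUB B m := by
      constructor
      · exact fun s hs => hmUB.2 s hs
      · intro u hu
        have h1 : u ⊓ b ∈ UB := ⟨inf_le_right, fun s hs => le_inf (hu hs) (hb hs)⟩
        have hnlt : ¬ u ⊓ b < m := hUBwf.not_lt_min hUBne h1
        have hcmp : m ≤ u ⊓ b := by
          by_cases hemb : m = u ⊓ b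
          · exact hemb.le
          · rcases TreeOrder.chain_Iic b hmUB.1 h1.1 hemb with h' | h'
            · exact h'
            · exact absurd (lt_of_le_of_ne h' (fun h'' => hemb h''.symm)) hnlt
        exact le_trans hcmp inf_le_left
    have hxm : x ∈ A m := by
      rw [← hA.iInter_chain B hBne hchain m hlub]
      exact hxmem
    have hBIic : B = Set.Iic m := by
      apply Set.Subset.antisymm
      · exact fun t ht => hlub.1 ht
      · exact fun t ht => hA.subset_of_le m t ht hxm
    rw [hSim, hBIic]
    constructor
    · rw [OnePoint.isClosed_image_coe]
      exact ⟨TreeOrder.isClosed_Iic' m, TreeOrder.isCompact_Iic' m⟩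
    · rw [OnePoint.isOpen_image_coe]
      exact TreeOrder.isOpen_Iic' m
  · have : B = ∅ := Set.not_nonempty_iff_eq_empty.mp hBne
    rw [hSim, this]
    simp [isClopen_empty]
end

section
/- Let T be an ℝ-embeddable tree of cardinality at most the continuum and let f: T → ℝ be a strictly order-preserving function. Then there exist a countably branching tree T′ containing T as a subtree and a strictly order-preserving function f′: T′ → ℝ such that f′↾T = f. -/
open Filter Topology Set

universe u v

namespace CBExt

variable {T : Type u} [TreeOrder T]

/-- any two elements below a common element are comparable -/
lemma cmp_of_le {s x y : T} (hx : x ≤ s) (hy : y ≤ s) : x ≤ y ∨ y ≤ x := by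
  rcases eq_or_lt_of_le hx with rfl | hx
  · exact Or.inr hy
  rcases eq_or_lt_of_le hy with rfl | hy
  · exact Or.inl hx.le
  rcases eq_or_ne x y with rfl | hne
  · exact Or.inl le_rfl
  exact TreeOrder.chain_lt s hx hy hne

lemma isWF_Ioc (t s : T) : Set.IsWF {x : T | t < x ∧ x ≤ s} := by
  refine ((TreeOrder.isWF_lt s).insert s).mono ?_
  rintro x ⟨-, hx⟩
  rcases eq_or_lt_of_le hx with rfl | hx
  · exact Set.mem_insert _ _
  · exact Set.mem_insert_of_mem _ hx

open Classical in
/-- the minimum element of the interval `(t, s]`, for `t < s`. -/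
noncomputable def mm (t s : T) : T :=
  if h : t < s then (isWF_Ioc t s).min ⟨s, h, le_rfl⟩ else s

lemma mm_mem {t s : T} (h : t < s) : t < mm t s ∧ mm t s ≤ s := by
  rw [mm, dif_pos h]; exact (isWF_Ioc t s).min_mem _

lemma lt_mm {t s : T} (h : t < s) : t < mm t s := (mm_mem h).1
lemma mm_le {t s : T} (h : t < s) : mm t s ≤ s := (mm_mem h).2

lemma mm_min {t s x : T} (h : t < s) (h1 : t < x) (h2 : x ≤ s) : mm t s ≤ x := by
  have hx : x ∈ {y : T | t < y ∧ y ≤ s} := ⟨h1, h2⟩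
  have hnot : ¬ x < mm t s := by
    rw [mm, dif_pos h]; exact (isWF_Ioc t s).not_lt_min _ hx
  rcases cmp_of_le h2 (mm_le h) with hc | hc
  · rcases eq_or_lt_of_le hc with rfl | hc
    · exact le_rfl
    · exact absurd hc hnot
  · exact hc

lemma le_of_lt_mm {t s x : T} (h : t < s) (hx : x < mm t s) : x ≤ t := by
  rcases eq_or_ne x t with rfl | hne
  · exact le_rfl
  have hc : x ≤ t ∨ t ≤ x := by
    rcases TreeOrder.chain_lt (mm t s) hx (lt_mm h) hne with hc | hc
    · exact Or.inl hc
    · exact Or.inr hc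
  rcases hc with hc | hc
  · exact hc
  · exfalso
    have htx : t < x := lt_of_le_of_ne hc (Ne.symm hne)
    have hxs : x ≤ s := hx.le.trans (mm_le h)
    exact (mm_min h htx hxs).not_gt hx

lemma mm_eq {t s x : T} (h : t < s) (h1 : t < x) (h2 : x ≤ s) : mm t x = mm t s := by
  have h3 : mm t s ≤ x := mm_min h h1 h2
  have h4 : mm t x ≤ mm t s := mm_min h1 (lt_mm h) h3
  have h5 : mm t s ≤ mm t x := mm_min h (lt_mm h1) ((mm_le h1).trans h2)
  exact le_antisymm h4 h5


/-- index of the dyadic bucket of `b - a` -/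
noncomputable def J (a b : ℝ) : ℕ := sInf {j : ℕ | ((1:ℝ)/2) ^ (j+1) ≤ b - a}

lemma J_spec {a b : ℝ} (h : a < b) : ((1:ℝ)/2) ^ (J a b + 1) ≤ b - a := by
  have hne : {j : ℕ | ((1:ℝ)/2) ^ (j+1) ≤ b - a}.Nonempty := by
    obtain ⟨n, hn⟩ := exists_pow_lt_of_lt_one (sub_pos.2 h) (by norm_num : (1:ℝ)/2 < 1)
    refine ⟨n, le_trans ?_ hn.le⟩
    apply pow_le_pow_of_le_one <;> norm_num
  exact Nat.sInf_mem hne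

/-- `σ` is a prefix of the infinite sequence `g` -/
def pfx (σ : List Bool) (g : ℕ → Bool) : Prop := ∀ i (h : i < σ.length), σ.get ⟨i, h⟩ = g i

lemma pfx_nil (g : ℕ → Bool) : pfx [] g := by intro i h; simp at h

lemma pfx_of_prefix {σ τ : List Bool} {g : ℕ → Bool} (h : σ <+: τ) (hτ : pfx τ g) : pfx σ g := by
  intro i hi
  have := h.getElem (by omega : i < σ.length)
  have h2 := hτ i (by have := h.length_le; omega)
  simp only [List.get_eq_getElem] at *
  rw [this, h2]

lemma pfx_cmp {σ τ : List Bool} {g : ℕ → Bool} (hσ : pfx σ g) (hτ : pfx τ g) :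
    σ <+: τ ∨ τ <+: σ := by
  rcases le_total σ.length τ.length with h | h
  · left
    rw [List.prefix_iff_eq_take]
    apply List.ext_getElem (by simp [h])
    intro i h1 h2
    rw [List.getElem_take]
    have e1 := hσ i (by simpa using h1)
    have e2 := hτ i (by simp at h2 ⊢; omega)
    simp only [List.get_eq_getElem] at e1 e2
    rw [e1, e2]
  · right
    rw [List.prefix_iff_eq_take]
    apply List.ext_getElem (by simp [h])
    intro i h1 h2
    rw [List.getElem_take]
    have e1 := hτ i (by simpa using h1)
    have e2 := hσ i (by simp at h2 ⊢; omega)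
    simp only [List.get_eq_getElem] at e1 e2
    rw [e1, e2]


lemma pfx_prefix {σ τ : List Bool} {g : ℕ → Bool} (hσ : pfx σ g) (hτ : pfx τ g)
    (h : σ.length ≤ τ.length) : σ <+: τ := by
  rw [List.prefix_iff_eq_take]
  apply List.ext_getElem (by simp [h])
  intro i h1 h2
  rw [List.getElem_take]
  have e1 := hσ i (by simpa using h1)
  have e2 := hτ i (by simp at h2 ⊢; omega)
  simp only [List.get_eq_getElem] at e1 e2
  rw [e1, e2]

lemma pfx_snoc {σ : List Bool} {g : ℕ → Bool} (h : pfx σ g) :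
    pfx (σ ++ [g σ.length]) g := by
  intro i hi
  simp only [List.length_append, List.length_singleton] at hi
  rcases lt_or_eq_of_le (Nat.lt_succ_iff.1 hi) with hlt | heq
  · have := h i hlt
    simp only [List.get_eq_getElem] at this ⊢
    rw [List.getElem_append_left hlt, this]
  · subst heq
    simp only [List.get_eq_getElem]
    rw [List.getElem_append_right (le_refl _)]
    simp

/-- longest common prefix of two lists -/
def lcpL : List Bool → List Bool → List Bool
  | [], _ => []
  | _, [] => []
  | a :: l, b :: m => if a = b then a :: lcpL l m else []

lemma prefix_cons {a : Bool} {l m : List Bool} (h : l <+: m) : a :: l <+: a :: m := by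
  obtain ⟨t, rfl⟩ := h; exact ⟨t, rfl⟩

lemma lcpL_prefix_left : ∀ σ τ : List Bool, lcpL σ τ <+: σ := by
  intro σ
  induction σ with
  | nil => intro τ; cases τ <;> simp [lcpL]
  | cons a l ih =>
    intro τ
    cases τ with
    | nil => simp [lcpL]
    | cons b m =>
      by_cases h : a = b
      · rw [lcpL, if_pos h]; exact prefix_cons (ih m)
      · rw [lcpL, if_neg h]; exact List.nil_prefix

lemma lcpL_prefix_right : ∀ σ τ : List Bool, lcpL σ τ <+: τ := by
  intro σ
  induction σ with
  | nil => intro τ; cases τ <;> simp [lcpL]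
  | cons a l ih =>
    intro τ
    cases τ with
    | nil => simp [lcpL]
    | cons b m =>
      by_cases h : a = b
      · rw [lcpL, if_pos h]; subst h; exact prefix_cons (ih m)
      · rw [lcpL, if_neg h]; exact List.nil_prefix

lemma le_lcpL : ∀ {ρ σ τ : List Bool}, ρ <+: σ → ρ <+: τ → ρ <+: lcpL σ τ := by
  intro ρ
  induction ρ with
  | nil => intro _ _ _ _; exact List.nil_prefix
  | cons a ρ ih =>
    rintro (_ | ⟨b, σ⟩) τ h1 h2
    · exact absurd h1.length_le (by simp)
    rcases τ with _ | ⟨c, τ⟩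
    · exact absurd h2.length_le (by simp)
    rw [List.cons_prefix_cons] at h1 h2
    obtain ⟨rfl, h1⟩ := h1
    obtain ⟨rfl, h2⟩ := h2
    rw [lcpL, if_pos rfl]
    exact prefix_cons (ih h1 h2)

/-- longest prefix of `σ` agreeing with `g` -/
def lcpG : List Bool → (ℕ → Bool) → List Bool
  | [], _ => []
  | a :: l, g => if a = g 0 then a :: lcpG l (fun n => g (n + 1)) else []

lemma pfx_cons {a : Bool} {l : List Bool} {g : ℕ → Bool} :
    pfx (a :: l) g ↔ a = g 0 ∧ pfx l (fun n => g (n + 1)) := by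
  constructor
  · intro h
    refine ⟨h 0 (by simp), fun i hi => ?_⟩
    have := h (i + 1) (by simpa using Nat.succ_lt_succ hi)
    simpa using this
  · rintro ⟨h0, h⟩ i hi
    cases i with
    | zero => simpa using h0
    | succ n =>
      have := h n (by simpa using Nat.lt_of_succ_lt_succ hi)
      simpa using this

lemma lcpG_prefix : ∀ (σ : List Bool) (g : ℕ → Bool), lcpG σ g <+: σ
  | [], _ => List.nil_prefix
  | a :: l, g => by
    by_cases h : a = g 0
    · simpa [lcpG, h] using lcpG_prefix l _
    · simp [lcpG, h, List.nil_prefix]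

lemma lcpG_pfx : ∀ (σ : List Bool) (g : ℕ → Bool), pfx (lcpG σ g) g
  | [], g => pfx_nil g
  | a :: l, g => by
    by_cases h : a = g 0
    · rw [lcpG, if_pos h, pfx_cons]
      exact ⟨h, lcpG_pfx l _⟩
    · rw [lcpG, if_neg h]; exact pfx_nil g

lemma le_lcpG : ∀ {ρ σ : List Bool} {g : ℕ → Bool}, ρ <+: σ → pfx ρ g → ρ <+: lcpG σ g := by
  intro ρ
  induction ρ with
  | nil => intro _ _ _ _; exact List.nil_prefix
  | cons a ρ ih =>
    rintro (_ | ⟨b, σ⟩) g h1 h2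
    · exact absurd h1.length_le (by simp)
    rw [List.cons_prefix_cons] at h1
    obtain ⟨rfl, h1⟩ := h1
    rw [pfx_cons] at h2
    rw [lcpG, if_pos h2.1]
    exact prefix_cons (ih h1 h2.2)

open Classical in
/-- longest common prefix of two sequences (junk if equal) -/
noncomputable def lcpFF (g g' : ℕ → Bool) : List Bool :=
  if h : ∃ n, g n ≠ g' n then List.ofFn (fun i : Fin (Nat.find h) => g i) else []

lemma lcpFF_pfx_left {g g' : ℕ → Bool} : pfx (lcpFF g g') g := by
  unfold lcpFF
  split
  · intro i hi
    simp only [List.length_ofFn] at hi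
    simp [List.get_ofFn]
  · exact pfx_nil g

lemma lcpFF_pfx_right {g g' : ℕ → Bool} : pfx (lcpFF g g') g' := by
  unfold lcpFF
  split
  · next h =>
    intro i hi
    simp only [List.length_ofFn] at hi
    have := Nat.find_min h hi
    push_neg at this
    simp [List.get_ofFn, this]
  · exact pfx_nil g'

lemma le_lcpFF {ρ : List Bool} {g g' : ℕ → Bool} (hne : g ≠ g')
    (h1 : pfx ρ g) (h2 : pfx ρ g') : ρ <+: lcpFF g g' := by
  have hex : ∃ n, g n ≠ g' n := by
    by_contra hc
    push_neg at hc
    exact hne (funext hc)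
  have hlen : ρ.length ≤ Nat.find hex := by
    by_contra hc
    push_neg at hc
    have e1 := h1 _ hc
    have e2 := h2 _ hc
    exact Nat.find_spec hex (e1 ▸ e2 ▸ rfl)
  refine pfx_prefix h1 lcpFF_pfx_left ?_
  rw [lcpFF, dif_pos hex]
  simpa using hlen

section Order

variable (f : T → ℝ) (ι : T → ℕ → Bool)

/-- the new node `(t,j,σ)` lies (strictly) below `s ∈ T`. -/
def Dir (t : T) (j : ℕ) (σ : List Bool) (s : T) : Prop :=
  t < s ∧ j = J (f t) (f (mm t s)) ∧ pfx σ (ι (mm t s))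

/-- the carrier of the extended tree -/
abbrev Tr (T : Type u) : Type u := T ⊕ (T × ℕ × List Bool)

/-- the order on the extended tree -/
def Le : Tr T → Tr T → Prop
  | .inl a, .inl b => a ≤ b
  | .inl a, .inr (t, _, _) => a ≤ t
  | .inr (t, j, σ), .inl s => Dir f ι t j σ s
  | .inr (t, j, σ), .inr (t', j', σ') => (t = t' ∧ j = j' ∧ σ <+: σ') ∨ Dir f ι t j σ t'

variable {f ι}

lemma dir_congr {t x s : T} (h : t < s) (h1 : t < x) (h2 : x ≤ s) {j σ} :
    Dir f ι t j σ x ↔ Dir f ι t j σ s := by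
  unfold Dir; rw [mm_eq h h1 h2]
  exact and_congr_left' (iff_of_true h1 h)

lemma dir_up {t x s : T} (hd : Dir f ι t j σ x) (h2 : x ≤ s) : Dir f ι t j σ s :=
  (dir_congr (lt_of_lt_of_le hd.1 h2) hd.1 h2).1 hd

lemma dir_down {t x s : T} (hd : Dir f ι t j σ s) (h1 : t < x) (h2 : x ≤ s) :
    Dir f ι t j σ x := (dir_congr hd.1 h1 h2).2 hd

lemma le_refl' : ∀ x : Tr T, Le f ι x x := by
  rintro (a | ⟨t, j, σ⟩)
  · exact le_rfl
  · exact Or.inl ⟨rfl, rfl, List.prefix_refl _⟩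

lemma le_trans' : ∀ x y z : Tr T, Le f ι x y → Le f ι y z → Le f ι x z := by
  rintro (a | ⟨t, j, σ⟩) (b | ⟨t', j', σ'⟩) (c | ⟨t'', j'', σ''⟩) h1 h2
  · exact le_trans h1 h2
  · exact le_trans h1 h2
  · exact le_trans h1 h2.1.le
  · rcases h2 with ⟨rfl, -, -⟩ | h2
    · exact h1
    · exact le_trans h1 h2.1.le
  · exact dir_up h1 h2
  · exact Or.inr (dir_up h1 h2)
  · rcases h1 with ⟨rfl, rfl, hp⟩ | h1
    · exact ⟨h2.1, h2.2.1, pfx_of_prefix hp h2.2.2⟩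
    · exact dir_up h1 h2.1.le
  · rcases h1 with ⟨rfl, rfl, hp⟩ | h1
    · rcases h2 with ⟨rfl, rfl, hp2⟩ | h2
      · exact Or.inl ⟨rfl, rfl, hp.trans hp2⟩
      · exact Or.inr ⟨h2.1, h2.2.1, pfx_of_prefix hp h2.2.2⟩
    · rcases h2 with ⟨rfl, rfl, hp2⟩ | h2
      · exact Or.inr h1
      · exact Or.inr (dir_up h1 h2.1.le)

lemma le_antisymm' : ∀ x y : Tr T, Le f ι x y → Le f ι y x → x = y := by
  rintro (a | ⟨t, j, σ⟩) (b | ⟨t', j', σ'⟩) h1 h2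
  · exact congrArg _ (le_antisymm h1 h2)
  · exact absurd (lt_of_lt_of_le h2.1 h1) (lt_irrefl _)
  · exact absurd (lt_of_lt_of_le h1.1 h2) (lt_irrefl _)
  · rcases h1 with ⟨rfl, rfl, hp⟩ | h1
    · rcases h2 with ⟨-, -, hp2⟩ | h2
      · exact congrArg _ (by
          refine Prod.ext rfl (Prod.ext rfl ?_)
          exact hp.eq_of_length_le hp2.length_le)
      · exact absurd h2.1 (lt_irrefl _)
    · rcases h2 with ⟨heq, -, -⟩ | h2
      · exact absurd (heq ▸ h1.1) (lt_irrefl _)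
      · exact absurd (h1.1.trans h2.1) (lt_irrefl _)


lemma inf_lt_left' {a b : T} (h1 : ¬a ≤ b) : a ⊓ b < a :=
  lt_of_le_of_ne inf_le_left (fun h => h1 (h ▸ inf_le_right))

lemma inf_lt_right' {a b : T} (h2 : ¬b ≤ a) : a ⊓ b < b :=
  lt_of_le_of_ne inf_le_right (fun h => h2 (h ▸ inf_le_left))

lemma mm_ne {a b : T} (h1 : ¬a ≤ b) (h2 : ¬b ≤ a) : mm (a ⊓ b) a ≠ mm (a ⊓ b) b := by
  intro he
  have hma : mm (a ⊓ b) a ≤ a := mm_le (inf_lt_left' h1)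
  have hmb : mm (a ⊓ b) a ≤ b := he ▸ mm_le (inf_lt_right' h2)
  exact (lt_mm (inf_lt_left' h1)).not_ge (le_inf hma hmb)

variable (f ι)

open Classical in
/-- infimum of two old elements -/
noncomputable def infAA (a b : T) : Tr T :=
  if a ≤ b then .inl a
  else if b ≤ a then .inl b
  else if J (f (a ⊓ b)) (f (mm (a ⊓ b) a)) = J (f (a ⊓ b)) (f (mm (a ⊓ b) b))
    then .inr (a ⊓ b, J (f (a ⊓ b)) (f (mm (a ⊓ b) a)),
      lcpFF (ι (mm (a ⊓ b) a)) (ι (mm (a ⊓ b) b)))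
    else .inl (a ⊓ b)

open Classical in
/-- infimum of an old element and a new node -/
noncomputable def infAN (a t : T) (j : ℕ) (σ : List Bool) : Tr T :=
  if a ≤ t then .inl a
  else if Dir f ι t j σ a then .inr (t, j, σ)
  else if h : t < a then
    (if j = J (f t) (f (mm t a)) then .inr (t, j, lcpG σ (ι (mm t a))) else .inl t)
  else infAA f ι a t

open Classical in
/-- infimum on the extended tree -/
noncomputable def inf' : Tr T → Tr T → Tr T
  | .inl a, .inl b => infAA f ι a b
  | .inl a, .inr (t, j, σ) => infAN f ι a t j σ
  | .inr (t, j, σ), .inl a => infAN f ι a t j σ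
  | .inr (t, j, σ), .inr (t', j', σ') =>
    if t = t' then (if j = j' then .inr (t, j, lcpL σ σ') else .inl t)
    else if t < t' then infAN f ι t' t j σ
    else infAN f ι t t' j' σ'

variable {f ι}

lemma infAA_le_left {a b : T} : Le f ι (infAA f ι a b) (.inl a) := by
  unfold infAA
  split_ifs with h1 h2 h3
  · exact le_refl' _
  · exact (h2 : b ≤ a)
  · exact ⟨inf_lt_left' h1, rfl, lcpFF_pfx_left⟩
  · exact (inf_le_left : a ⊓ b ≤ a)

lemma infAA_le_right {a b : T} : Le f ι (infAA f ι a b) (.inl b) := by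
  unfold infAA
  split_ifs with h1 h2 h3
  · exact (h1 : a ≤ b)
  · exact le_refl' _
  · exact ⟨inf_lt_right' h2, h3, lcpFF_pfx_right⟩
  · exact (inf_le_right : a ⊓ b ≤ b)

lemma le_infAA (hι : Function.Injective ι) {c : Tr T} {a b : T}
    (h1 : Le f ι c (.inl a)) (h2 : Le f ι c (.inl b)) : Le f ι c (infAA f ι a b) := by
  unfold infAA
  split_ifs with hab hba hJ
  · exact h1
  · exact h2
  · match c, h1, h2 with
    | .inl y, h1, h2 => exact (le_inf h1 h2 : y ≤ a ⊓ b)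
    | .inr (th, jh, σh), h1, h2 =>
      rcases eq_or_lt_of_le (le_inf h1.1.le h2.1.le : th ≤ a ⊓ b) with heq | hlt
      · subst heq
        exact Or.inl ⟨rfl, h1.2.1, le_lcpFF (hι.ne (mm_ne hab hba)) h1.2.2 h2.2.2⟩
      · exact Or.inr (dir_down h1 hlt inf_le_left)
  · match c, h1, h2 with
    | .inl y, h1, h2 => exact (le_inf h1 h2 : y ≤ a ⊓ b)
    | .inr (th, jh, σh), h1, h2 =>
      rcases eq_or_lt_of_le (le_inf h1.1.le h2.1.le : th ≤ a ⊓ b) with heq | hlt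
      · exfalso; subst heq; exact hJ (h1.2.1 ▸ h2.2.1)
      · exact dir_down h1 hlt inf_le_left

lemma infAN_le_left {a t : T} {j σ} : Le f ι (infAN f ι a t j σ) (.inl a) := by
  unfold infAN
  split_ifs with h1 h2 h3 h4
  · exact le_refl' _
  · exact h2
  · exact ⟨h3, h4, lcpG_pfx σ _⟩
  · exact h3.le
  · exact infAA_le_left

lemma infAN_le_node {a t : T} {j σ} : Le f ι (infAN f ι a t j σ) (.inr (t, j, σ)) := by
  unfold infAN
  split_ifs with h1 h2 h3 h4
  · exact h1
  · exact le_refl' _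
  · exact Or.inl ⟨rfl, rfl, lcpG_prefix σ _⟩
  · exact (le_rfl : t ≤ t)
  · exact le_trans' _ _ _ infAA_le_right (le_rfl : t ≤ t)

lemma infAN_le_inr {a t : T} {j σ} (j0 : ℕ) (σ0 : List Bool) :
    Le f ι (infAN f ι a t j σ) (.inr (a, j0, σ0)) := by
  unfold infAN
  split_ifs with h1 h2 h3 h4
  · exact (le_rfl : a ≤ a)
  · exact Or.inr h2
  · exact Or.inr ⟨h3, h4, lcpG_pfx σ _⟩
  · exact h3.le
  · exact le_trans' _ _ _ infAA_le_left (le_rfl : a ≤ a)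

lemma le_infAN (hι : Function.Injective ι) {c : Tr T} {a t : T} {j σ}
    (h1 : Le f ι c (.inl a)) (h2 : Le f ι c (.inr (t, j, σ))) :
    Le f ι c (infAN f ι a t j σ) := by
  unfold infAN
  split_ifs with ha hd ht hj
  · exact h1
  · exact h2
  · match c, h1, h2 with
    | .inl y, h1, h2 => exact (h2 : y ≤ t)
    | .inr (th, jh, σh), h1, h2 =>
      rcases h2 with ⟨rfl, rfl, hp⟩ | hdd
      · exact Or.inl ⟨rfl, rfl, le_lcpG hp h1.2.2⟩
      · exact Or.inr hdd
  · match c, h1, h2 with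
    | .inl y, h1, h2 => exact (h2 : y ≤ t)
    | .inr (th, jh, σh), h1, h2 =>
      rcases h2 with ⟨rfl, rfl, hp⟩ | hdd
      · exact absurd h1.2.1 hj
      · exact hdd
  · refine le_infAA hι h1 ?_
    match c, h1, h2 with
    | .inl y, h1, h2 => exact (h2 : y ≤ t)
    | .inr (th, jh, σh), h1, h2 =>
      rcases h2 with ⟨rfl, rfl, hp⟩ | hdd
      · exact absurd h1.1 ht
      · exact hdd

lemma inf'_le_left : ∀ x y : Tr T, Le f ι (inf' f ι x y) x := by
  rintro (a | ⟨t, j, σ⟩) (b | ⟨t', j', σ'⟩)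
  · exact infAA_le_left
  · exact infAN_le_left
  · exact infAN_le_node
  · show Le f ι (inf' f ι _ _) _
    simp only [inf']
    split_ifs with h1 h2 h3
    · exact Or.inl ⟨rfl, rfl, lcpL_prefix_left σ σ'⟩
    · exact (le_rfl : t ≤ t)
    · exact infAN_le_node
    · exact infAN_le_inr j σ

lemma inf'_le_right : ∀ x y : Tr T, Le f ι (inf' f ι x y) y := by
  rintro (a | ⟨t, j, σ⟩) (b | ⟨t', j', σ'⟩)
  · exact infAA_le_right
  · exact infAN_le_node
  · exact infAN_le_left
  · show Le f ι (inf' f ι _ _) _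
    simp only [inf']
    split_ifs with h1 h2 h3
    · exact Or.inl ⟨h1, h2, lcpL_prefix_right σ σ'⟩
    · exact (h1.le : t ≤ t')
    · exact infAN_le_inr j' σ'
    · exact infAN_le_node

lemma le_inf' (hι : Function.Injective ι) :
    ∀ c x y : Tr T, Le f ι c x → Le f ι c y → Le f ι c (inf' f ι x y) := by
  rintro c (a | ⟨t, j, σ⟩) (b | ⟨t', j', σ'⟩) h1 h2
  · exact le_infAA hι h1 h2
  · exact le_infAN hι h1 h2
  · exact le_infAN hι h2 h1
  · show Le f ι c (inf' f ι _ _)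
    simp only [inf']
    split_ifs with heq hj hlt
    · subst heq; subst hj
      match c, h1, h2 with
      | .inl y, h1, h2 => exact (h1 : y ≤ t)
      | .inr (th, jh, σh), h1, h2 =>
        rcases h1 with ⟨rfl, rfl, hp1⟩ | hd1
        · rcases h2 with ⟨-, -, hp2⟩ | hd2
          · exact Or.inl ⟨rfl, rfl, le_lcpL hp1 hp2⟩
          · exact absurd hd2.1 (lt_irrefl _)
        · exact Or.inr hd1
    · subst heq
      match c, h1, h2 with
      | .inl y, h1, h2 => exact (h1 : y ≤ t)
      | .inr (th, jh, σh), h1, h2 =>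
        rcases h1 with ⟨rfl, rfl, hp1⟩ | hd1
        · rcases h2 with ⟨-, h2j, hp2⟩ | hd2
          · exact absurd h2j hj
          · exact absurd hd2.1 (lt_irrefl _)
        · exact hd1
    · refine le_infAN hι ?_ h1
      match c, h1, h2 with
      | .inl y, h1, h2 => exact (h2 : y ≤ t')
      | .inr (th, jh, σh), h1, h2 =>
        rcases h2 with ⟨rfl, rfl, hp2⟩ | hd2
        · rcases h1 with ⟨rfl, -, -⟩ | hd1
          · exact absurd rfl heq
          · exact absurd hd1.1 (asymm hlt)
        · exact hd2
    · refine le_infAN hι ?_ h2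
      match c, h1, h2 with
      | .inl y, h1, h2 => exact (h1 : y ≤ t)
      | .inr (th, jh, σh), h1, h2 =>
        rcases h1 with ⟨rfl, rfl, hp1⟩ | hd1
        · rcases h2 with ⟨rfl, -, -⟩ | hd2
          · exact absurd rfl heq
          · exact absurd hd2.1 hlt
        · exact hd1


variable (f ι) in
/-- strict order on the extension -/
def Lt (x y : Tr T) : Prop := Le f ι x y ∧ ¬ Le f ι y x

lemma lt_inl_inl {a b : T} : Lt f ι (.inl a) (.inl b) ↔ a < b := by
  constructor
  · rintro ⟨h1, h2⟩; exact lt_of_le_not_ge h1 h2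
  · intro h; exact ⟨h.le, fun hc => h.not_ge hc⟩

lemma lt_inl_inr {a t : T} {j σ} : Lt f ι (.inl a) (.inr (t, j, σ)) ↔ a ≤ t := by
  constructor
  · exact fun h => h.1
  · intro h; exact ⟨h, fun hd => hd.1.not_ge h⟩

lemma lt_inr_inl {s t : T} {j σ} : Lt f ι (.inr (t, j, σ)) (.inl s) ↔ Dir f ι t j σ s := by
  constructor
  · exact fun h => h.1
  · intro hd; exact ⟨hd, fun hle => hd.1.not_ge hle⟩

lemma lt_inr_inr {t t' : T} {j j' σ σ'} :
    Lt f ι (.inr (t, j, σ)) (.inr (t', j', σ')) ↔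
      (t = t' ∧ j = j' ∧ σ <+: σ' ∧ σ ≠ σ') ∨ Dir f ι t j σ t' := by
  constructor
  · rintro ⟨h1, h2⟩
    rcases h1 with ⟨rfl, rfl, hp⟩ | hd
    · refine Or.inl ⟨rfl, rfl, hp, fun hσ => h2 (Or.inl ⟨rfl, rfl, hσ ▸ List.prefix_refl _⟩)⟩
    · exact Or.inr hd
  · rintro (⟨rfl, rfl, hp, hne⟩ | hd)
    · refine ⟨Or.inl ⟨rfl, rfl, hp⟩, fun hc => ?_⟩
      rcases hc with ⟨-, -, hp'⟩ | hd'
      · exact hne (hp.eq_of_length_le hp'.length_le)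
      · exact absurd hd'.1 (lt_irrefl _)
    · refine ⟨Or.inr hd, fun hc => ?_⟩
      rcases hc with ⟨heq, -, -⟩ | hd'
      · exact absurd (heq ▸ hd.1) (lt_irrefl _)
      · exact absurd hd'.1 (asymm hd.1)

/-- comparability of two new nodes strictly below a common old element -/
lemma cmp_dir {t1 t2 : T} {j1 j2 σ1 σ2} {s : T}
    (hd1 : Dir f ι t1 j1 σ1 s) (hd2 : Dir f ι t2 j2 σ2 s) :
    Le f ι (.inr (t1, j1, σ1)) (.inr (t2, j2, σ2)) ∨
      Le f ι (.inr (t2, j2, σ2)) (.inr (t1, j1, σ1)) := by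
  rcases eq_or_ne t1 t2 with rfl | hne
  · have hj : j1 = j2 := hd1.2.1.trans hd2.2.1.symm
    rcases pfx_cmp hd1.2.2 hd2.2.2 with hp | hp
    · exact Or.inl (Or.inl ⟨rfl, hj, hp⟩)
    · exact Or.inr (Or.inl ⟨rfl, hj.symm, hp⟩)
  · rcases cmp_of_le hd1.1.le hd2.1.le with hc | hc
    · exact Or.inl (Or.inr (dir_down hd1 (lt_of_le_of_ne hc hne) hd2.1.le))
    · exact Or.inr (Or.inr (dir_down hd2 (lt_of_le_of_ne hc (Ne.symm hne)) hd1.1.le))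

/-- comparability of an old element and a new node below a common old element -/
lemma cmp_inl_dir {a t : T} {j σ} {s : T} (ha : a ≤ s) (hd : Dir f ι t j σ s) :
    Le f ι (.inl a) (.inr (t, j, σ)) ∨ Le f ι (.inr (t, j, σ)) (.inl a) := by
  rcases cmp_of_le ha hd.1.le with hc | hc
  · exact Or.inl hc
  · rcases eq_or_lt_of_le hc with rfl | hlt
    · exact Or.inl le_rfl
    · exact Or.inr (dir_down hd hlt ha)

lemma chain_lt' : ∀ u : Tr T, IsChain (fun x y => Le f ι x y) {x | Lt f ι x u} := by
  rintro (s | ⟨t0, j0, σ0⟩) x hx y hy hne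
  · match x, y, hx, hy with
    | .inl a, .inl b, hx, hy =>
      have hab : a ≠ b := fun h => hne (congrArg _ h)
      exact TreeOrder.chain_lt s (lt_inl_inl.1 hx) (lt_inl_inl.1 hy) hab
    | .inl a, .inr (t, j, σ), hx, hy =>
      exact cmp_inl_dir (lt_inl_inl.1 hx).le (lt_inr_inl.1 hy)
    | .inr (t, j, σ), .inl a, hx, hy =>
      exact (cmp_inl_dir (lt_inl_inl.1 hy).le (lt_inr_inl.1 hx)).symm
    | .inr (t, j, σ), .inr (t', j', σ'), hx, hy =>
      exact cmp_dir (lt_inr_inl.1 hx) (lt_inr_inl.1 hy)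
  · match x, y, hx, hy with
    | .inl a, .inl b, hx, hy =>
      exact cmp_of_le (lt_inl_inr.1 hx) (lt_inl_inr.1 hy)
    | .inl a, .inr (t, j, σ), hx, hy =>
      rcases lt_inr_inr.1 hy with ⟨rfl, rfl, hp, -⟩ | hd
      · exact Or.inl (lt_inl_inr.1 hx)
      · exact cmp_inl_dir (lt_inl_inr.1 hx) hd
    | .inr (t, j, σ), .inl a, hx, hy =>
      rcases lt_inr_inr.1 hx with ⟨rfl, rfl, hp, -⟩ | hd
      · exact Or.inr (lt_inl_inr.1 hy)
      · exact (cmp_inl_dir (lt_inl_inr.1 hy) hd).symm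
    | .inr (t, j, σ), .inr (t', j', σ'), hx, hy =>
      rcases lt_inr_inr.1 hx with ⟨rfl, rfl, hp, -⟩ | hd
      · rcases lt_inr_inr.1 hy with ⟨rfl, rfl, hp', -⟩ | hd'
        · rcases List.prefix_or_prefix_of_prefix hp hp' with hc | hc
          · exact Or.inl (Or.inl ⟨rfl, rfl, hc⟩)
          · exact Or.inr (Or.inl ⟨rfl, rfl, hc⟩)
        · exact Or.inr (Or.inr hd')
      · rcases lt_inr_inr.1 hy with ⟨rfl, rfl, hp', -⟩ | hd'
        · exact Or.inl (Or.inr hd)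
        · exact cmp_dir hd hd'

/-- projection to the old tree -/
def pi : Tr T → T
  | .inl a => a
  | .inr (t, _, _) => t

lemma pi_mono {x y : Tr T} (h : Le f ι x y) : pi x ≤ pi y := by
  match x, y, h with
  | .inl a, .inl b, h => exact h
  | .inl a, .inr (t, j, σ), h => exact h
  | .inr (t, j, σ), .inl b, h => exact h.1.le
  | .inr (t, j, σ), .inr (t', j', σ'), h =>
    rcases h with ⟨rfl, -, -⟩ | hd
    · exact le_rfl
    · exact hd.1.le

/-- length function decreasing along equal-projection descents -/
def ell : Tr T → ℕ
  | .inl _ => 0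
  | .inr (_, _, σ) => σ.length + 1

lemma ell_dec {x y : Tr T} (h : Lt f ι x y) (hpi : pi x = pi y) : ell x < ell y := by
  match x, y, h with
  | .inl a, .inl b, h =>
    simp only [pi] at hpi
    exact absurd hpi (lt_inl_inl.1 h).ne
  | .inl a, .inr (t, j, σ), h => simp [ell]
  | .inr (t, j, σ), .inl b, h =>
    simp only [pi] at hpi
    exact absurd (lt_inr_inl.1 h).1 (hpi ▸ lt_irrefl _)
  | .inr (t, j, σ), .inr (t', j', σ'), h =>
    simp only [pi] at hpi
    rcases lt_inr_inr.1 h with ⟨rfl, rfl, hp, hne⟩ | hd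
    · have : σ.length < σ'.length := by
        rcases lt_or_eq_of_le hp.length_le with h' | h'
        · exact h'
        · exact absurd (hp.eq_of_length_le h'.ge) hne
      simpa [ell] using this
    · exact absurd hd.1 (hpi ▸ lt_irrefl _)

lemma noDesc (g : ℕ → Tr T) (hg : ∀ n, Lt f ι (g (n + 1)) (g n)) : False := by
  have hle : ∀ m k, Le f ι (g (m + k)) (g m) := by
    intro m k
    induction k with
    | zero => exact le_refl' _
    | succ k ih => exact le_trans' _ _ _ (hg (m + k)).1 ih
  -- the projected sequence is eventually constant
  have hwf : Set.IsWF (insert (pi (g 0)) {x : T | x < pi (g 0)}) :=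
    (TreeOrder.isWF_lt (pi (g 0))).insert _
  have hsub : Set.range (fun n => pi (g n)) ⊆ insert (pi (g 0)) {x : T | x < pi (g 0)} := by
    rintro x ⟨n, rfl⟩
    rcases eq_or_lt_of_le (pi_mono (by simpa using hle 0 n)) with h | h
    · exact h ▸ Set.mem_insert _ _
    · exact Set.mem_insert_of_mem _ h
  have hwf2 : Set.IsWF (Set.range (fun n => pi (g n))) := hwf.mono hsub
  have hne : (Set.range (fun n => pi (g n))).Nonempty := ⟨_, 0, rfl⟩
  obtain ⟨N, hN⟩ : ∃ N, pi (g N) = hwf2.min hne := hwf2.min_mem hne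
  have hconst : ∀ k, pi (g (N + k)) = pi (g N) := by
    intro k
    have h1 : pi (g (N + k)) ≤ pi (g N) := pi_mono (hle N k)
    have h2 : ¬ pi (g (N + k)) < hwf2.min hne := hwf2.not_lt_min hne ⟨N + k, rfl⟩
    rcases eq_or_lt_of_le h1 with h | h
    · exact h
    · exact absurd (hN ▸ h) h2
  have hdec : ∀ k, ell (g (N + (k + 1))) < ell (g (N + k)) := by
    intro k
    have := hg (N + k)
    have hp : pi (g (N + k + 1)) = pi (g (N + k)) := by
      have e1 := hconst (k + 1)
      have e2 := hconst k
      rw [← Nat.add_assoc] at e1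
      rw [e1, e2]
    have hres := ell_dec this hp
    rwa [Nat.add_assoc] at hres
  have hbound : ∀ k, ell (g (N + k)) + k ≤ ell (g N) := by
    intro k
    induction k with
    | zero => simp
    | succ k ih => have := hdec k; omega
  have := hbound (ell (g N) + 1)
  omega


lemma append_prefix {l m σ : List Bool} (h : l <+: m) : σ ++ l <+: σ ++ m := by
  obtain ⟨w, rfl⟩ := h; exact ⟨w, by simp⟩

lemma prefix_length_lt {σ σ' : List Bool} (hp : σ <+: σ') (hne : σ ≠ σ') :
    σ.length < σ'.length := by
  rcases lt_or_eq_of_le hp.length_le with h' | h'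
  · exact h'
  · exact absurd (hp.eq_of_length_le h'.ge) hne

lemma covers_inl (t : T) :
    {v : Tr T | Lt f ι (.inl t) v ∧ ∀ z, Lt f ι (.inl t) z → ¬ Lt f ι z v} ⊆
      Set.range (fun j : ℕ => (Sum.inr (t, j, ([] : List Bool)) : Tr T)) := by
  rintro (s | ⟨t', j, σ⟩) ⟨h1, h2⟩
  · exfalso
    have hts : t < s := lt_inl_inl.1 h1
    exact h2 (.inr (t, J (f t) (f (mm t s)), []))
      (lt_inl_inr.2 le_rfl) (lt_inr_inl.2 ⟨hts, rfl, pfx_nil _⟩)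
  · have ht : t ≤ t' := lt_inl_inr.1 h1
    rcases eq_or_lt_of_le ht with rfl | hlt
    · rcases eq_or_ne σ [] with rfl | hσ
      · exact ⟨j, rfl⟩
      · exfalso
        exact h2 (.inr (t, j, [])) (lt_inl_inr.2 le_rfl)
          (lt_inr_inr.2 (Or.inl ⟨rfl, rfl, List.nil_prefix, Ne.symm hσ⟩))
    · exfalso
      exact h2 (.inl t') (lt_inl_inl.2 hlt) (lt_inl_inr.2 le_rfl)

lemma covers_inr (t : T) (j : ℕ) (σ : List Bool) :
    {v : Tr T | Lt f ι (.inr (t, j, σ)) v ∧ ∀ z, Lt f ι (.inr (t, j, σ)) z → ¬ Lt f ι z v} ⊆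
      {Sum.inr (t, j, σ ++ [false]), Sum.inr (t, j, σ ++ [true])} := by
  rintro (s | ⟨t', j', σ'⟩) ⟨h1, h2⟩
  · exfalso
    have hd : Dir f ι t j σ s := lt_inr_inl.1 h1
    refine h2 (.inr (t, j, σ ++ [ι (mm t s) σ.length]))
      (lt_inr_inr.2 (Or.inl ⟨rfl, rfl, List.prefix_append _ _, by simp⟩))
      (lt_inr_inl.2 ⟨hd.1, hd.2.1, pfx_snoc hd.2.2⟩)
  · rcases lt_inr_inr.1 h1 with ⟨rfl, rfl, hp, hne⟩ | hd
    · obtain ⟨u, rfl⟩ := hp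
      have hu : u ≠ [] := by rintro rfl; simp at hne
      rcases eq_or_ne u.length 1 with h1l | h1l
      · obtain ⟨b, rfl⟩ := List.length_eq_one_iff.1 h1l
        cases b
        · exact Set.mem_insert _ _
        · exact Set.mem_insert_of_mem _ rfl
      · exfalso
        rcases u with _ | ⟨c, u'⟩
        · exact absurd rfl hu
        have hu2 : u' ≠ [] := by rintro rfl; simp at h1l
        refine h2 (.inr (t, j, σ ++ [c]))
          (lt_inr_inr.2 (Or.inl ⟨rfl, rfl, List.prefix_append _ _, ?_⟩))
          (lt_inr_inr.2 (Or.inl ⟨rfl, rfl, append_prefix ⟨u', rfl⟩, ?_⟩))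
        · intro hc
          have := congrArg List.length hc
          simp at this
        · intro hc
          apply hu2
          have := List.append_cancel_left hc
          simpa using this.symm
    · exfalso
      exact h2 (.inl t') (lt_inr_inl.2 hd) (lt_inl_inr.2 le_rfl)

/-- the extended real-valued function -/
noncomputable def fex (f : T → ℝ) : Tr T → ℝ
  | .inl a => f a
  | .inr (t, j, σ) => f t + (1/2 : ℝ)^(j+1) * (1 - (1/2 : ℝ)^(σ.length+1))

lemma val_pos (j n : ℕ) : 0 < (1/2 : ℝ)^(j+1) * (1 - (1/2 : ℝ)^(n+1)) := by
  apply mul_pos (by positivity)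
  have : (1/2 : ℝ)^(n+1) < 1 := pow_lt_one₀ (by norm_num) (by norm_num) (Nat.succ_ne_zero n)
  linarith

lemma val_lt (j n : ℕ) : (1/2 : ℝ)^(j+1) * (1 - (1/2 : ℝ)^(n+1)) < (1/2 : ℝ)^(j+1) := by
  have h1 : (0:ℝ) < (1/2 : ℝ)^(j+1) := by positivity
  have h2 : (0:ℝ) < (1/2 : ℝ)^(n+1) := by positivity
  nlinarith

lemma val_mono (j : ℕ) {n n' : ℕ} (h : n < n') :
    (1/2 : ℝ)^(j+1) * (1 - (1/2 : ℝ)^(n+1)) < (1/2 : ℝ)^(j+1) * (1 - (1/2 : ℝ)^(n'+1)) := by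
  have h1 : (0:ℝ) < (1/2 : ℝ)^(j+1) := by positivity
  have h2 : (1/2 : ℝ)^(n'+1) < (1/2 : ℝ)^(n+1) :=
    pow_lt_pow_right_of_lt_one₀ (by norm_num) (by norm_num) (by omega)
  nlinarith

lemma dir_val_lt {t s : T} {j σ} (hf : StrictMono f) (hd : Dir f ι t j σ s) :
    f t + (1/2 : ℝ)^(j+1) * (1 - (1/2 : ℝ)^(σ.length+1)) < f s := by
  have hm : t < mm t s := lt_mm hd.1
  have hJ : ((1:ℝ)/2) ^ (J (f t) (f (mm t s)) + 1) ≤ f (mm t s) - f t := J_spec (hf hm)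
  have hJ2 : ((1:ℝ)/2) ^ (j + 1) ≤ f (mm t s) - f t := by rw [hd.2.1]; exact hJ
  have hms : f (mm t s) ≤ f s := hf.monotone (mm_le hd.1)
  linarith [val_lt j σ.length]

lemma fex_strict (hf : StrictMono f) {x y : Tr T} (h : Lt f ι x y) : fex f x < fex f y := by
  match x, y with
  | .inl a, .inl b =>
    simp only [fex]
    exact hf (lt_inl_inl.1 h)
  | .inl a, .inr (t, j, σ) =>
    have h1 := hf.monotone (lt_inl_inr.1 h)
    have h2 := val_pos j σ.length
    simp only [fex]
    linarith
  | .inr (t, j, σ), .inl s =>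
    simp only [fex]
    exact dir_val_lt hf (lt_inr_inl.1 h)
  | .inr (t, j, σ), .inr (t', j', σ') =>
    rcases lt_inr_inr.1 h with ⟨rfl, rfl, hp, hne⟩ | hd
    · have hlen := prefix_length_lt hp hne
      have := val_mono j hlen
      simp only [fex]
      linarith
    · have h1 := dir_val_lt hf hd
      have h2 := val_pos j' σ'.length
      simp only [fex]
      linarith

lemma bot_le' : ∀ x : Tr T, Le f ι (.inl ⊥) x := by
  rintro (a | ⟨t, j, σ⟩)
  · exact bot_le
  · exact bot_le

variable (f ι)

/-- the partial order on the extension -/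
noncomputable def po : PartialOrder (Tr T) where
  le := Le f ι
  lt := Lt f ι
  le_refl := le_refl'
  le_trans := le_trans'
  le_antisymm := le_antisymm'
  lt_iff_le_not_ge := fun _ _ => Iff.rfl

/-- the semilattice structure on the extension -/
noncomputable def sli (hι : Function.Injective ι) : SemilatticeInf (Tr T) :=
  { po f ι with
    inf := inf' f ι
    inf_le_left := inf'_le_left
    inf_le_right := inf'_le_right
    le_inf := le_inf' hι }

/-- the tree order on the extension -/
noncomputable def tro (hι : Function.Injective ι) : TreeOrder (Tr T) :=
  letI : SemilatticeInf (Tr T) := sli f ι hι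
  { bot := .inl ⊥
    bot_le := bot_le'
    chain_lt := chain_lt'
    isWF_lt := by
      intro u
      refine (@Set.isWF_iff_no_descending_seq (Tr T) this.toPreorder _).2 ?_
      intro g hg hmem
      exact noDesc g (fun n => hg (Nat.lt_succ_self n)) }

end Order
end CBExt

/-- Every ℝ-embeddable tree of cardinality at most the continuum, with a strictly
order-preserving map `f` to `ℝ`, embeds into a countably branching tree `T'` in such
a way that `f` extends to a strictly order-preserving `f' : T' → ℝ`. -/
theorem exists_countablyBranching_extension {T : Type u} [TreeOrder T]
    (hT : Cardinal.mk T ≤ Cardinal.continuum.{u}) (f : T → ℝ) (hf : StrictMono f) :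
    ∃ (T' : Type u) (_ : TreeOrder T') (e : T ↪o T') (f' : T' → ℝ),
      (∀ t : T', {s : T' | t ⋖ s}.Countable) ∧ StrictMono f' ∧ ∀ t : T, f' (e t) = f t := by
  classical
  have hinj : Nonempty (T ↪ (ℕ → Bool)) := by
    refine Cardinal.lift_mk_le'.1 ?_
    have hmk : Cardinal.mk (ℕ → Bool) = Cardinal.continuum := by
      simp [Cardinal.mk_arrow]
    rw [hmk, Cardinal.lift_continuum, Cardinal.lift_uzero]
    exact hT
  obtain ⟨ι⟩ := hinj
  letI inst : TreeOrder (CBExt.Tr T) := CBExt.tro f (fun t => ι t) (fun a b h => ι.injective h)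
  refine ⟨CBExt.Tr T, inst,
    ⟨⟨Sum.inl, fun a b h => Sum.inl.inj h⟩, Iff.rfl⟩, CBExt.fex f, ?_, ?_, fun t => rfl⟩
  · rintro (t | ⟨t, j, σ⟩)
    · refine Set.Countable.mono ?_
        (Set.countable_range (fun j : ℕ => (Sum.inr (t, j, ([] : List Bool)) : CBExt.Tr T)))
      exact fun v hv => CBExt.covers_inl t ⟨hv.1, fun z h1 h2 => hv.2 h1 h2⟩
    · have hfin : ({Sum.inr (t, j, σ ++ [false]), Sum.inr (t, j, σ ++ [true])} :
          Set (CBExt.Tr T)).Countable :=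
        ((Set.finite_singleton _).insert _).countable
      refine Set.Countable.mono ?_ hfin
      exact fun v hv => CBExt.covers_inr t j σ ⟨hv.1, fun z h1 h2 => hv.2 h1 h2⟩
  · intro x y h
    exact CBExt.fex_strict hf h
end

section
/- Let T be a countably branching tree with a strictly order-preserving function f: T → ℝ. Then there exists a tree embedding ψ: T → σQ such that the image ψ(T) is an initial segment (initial subtree) of σQ and f(t) ≥ sup ψ(t) for every t ∈ T. -/
open Filter Topology Set

universe u v

/-- `s` is an initial segment of `t` (as subsets of `ℚ`): `s ⊆ t` and every element
of `t \ s` lies above every element of `s`. -/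
def QInitSeg (s t : Set ℚ) : Prop :=
  s ⊆ t ∧ ∀ x ∈ s, ∀ y ∈ t, y ∉ s → x ≤ y

theorem QInitSeg.refl (s : Set ℚ) : QInitSeg s s :=
  ⟨subset_rfl, fun _ _ y hy hyn => absurd hy hyn⟩

theorem QInitSeg.trans' {s t u : Set ℚ} (h1 : QInitSeg s t) (h2 : QInitSeg t u) :
    QInitSeg s u := by
  refine ⟨h1.1.trans h2.1, fun x hx y hy hyn => ?_⟩
  by_cases hyt : y ∈ t
  · exact h1.2 x hx y hyt hyn
  · exact h2.2 x (h1.1 hx) y hy hyt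

theorem QInitSeg.antisymm' {s t : Set ℚ} (h1 : QInitSeg s t) (h2 : QInitSeg t s) : s = t :=
  Set.Subset.antisymm h1.1 h2.1

/-- The tree `σℚ` of all bounded well-ordered subsets of `ℚ`. -/
def sigmaQ : Type := {s : Set ℚ // s.IsWF ∧ BddAbove s}

/-- `σℚ` is ordered by "being an initial segment". -/
instance : PartialOrder sigmaQ where
  le s t := QInitSeg s.1 t.1
  le_refl s := QInitSeg.refl s.1
  le_trans _ _ _ h1 h2 := QInitSeg.trans' h1 h2
  le_antisymm _ _ h1 h2 := Subtype.ext (QInitSeg.antisymm' h1 h2)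

section Aux

open Set

universe w

variable {T : Type w} [TreeOrder T]

theorem TreeOrder.comparable_of_le {t x y : T} (hx : x ≤ t) (hy : y ≤ t) : x ≤ y ∨ y ≤ x := by
  rcases eq_or_lt_of_le hx with rfl | hx'
  · exact Or.inr hy
  rcases eq_or_lt_of_le hy with rfl | hy'
  · exact Or.inl hx'.le
  rcases eq_or_ne x y with rfl | hne
  · exact Or.inl le_rfl
  exact TreeOrder.chain_lt t hx' hy' hne

theorem TreeOrder.covBy_unique {m m' r : T} (h : m ⋖ r) (h' : m' ⋖ r) : m = m' := by
  rcases TreeOrder.comparable_of_le h.1.le h'.1.le with hmm | hmm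
  · rcases eq_or_lt_of_le hmm with rfl | hlt
    · rfl
    · exact absurd h'.1 (h.2 hlt)
  · rcases eq_or_lt_of_le hmm with rfl | hlt
    · rfl
    · exact absurd h.1 (h'.2 hlt)

theorem TreeOrder.le_of_lt_covBy {m r x : T} (h : m ⋖ r) (hx : x < r) : x ≤ m := by
  rcases TreeOrder.comparable_of_le hx.le h.1.le with h1 | h1
  · exact h1
  · rcases eq_or_lt_of_le h1 with rfl | h2
    · exact le_rfl
    · exact absurd hx (h.2 h2)

theorem TreeOrder.isWF_le (t : T) : {y : T | y ≤ t}.IsWF := by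
  have h : {y : T | y ≤ t} = insert t {y : T | y < t} := by
    ext y
    simp only [Set.mem_setOf_eq, Set.mem_insert_iff, le_iff_lt_or_eq, or_comm]
  rw [h]
  exact (TreeOrder.isWF_lt t).insert t

theorem TreeOrder.exists_covBy_le {s t : T} (h : s < t) : ∃ c : T, s ⋖ c ∧ c ≤ t := by
  have hD : {x : T | s < x ∧ x ≤ t}.IsWF := (TreeOrder.isWF_le t).mono (fun x hx => hx.2)
  have hne : {x : T | s < x ∧ x ≤ t}.Nonempty := ⟨t, h, le_rfl⟩
  refine ⟨hD.min hne, ⟨(hD.min_mem hne).1, fun x hx1 hx2 => ?_⟩, (hD.min_mem hne).2⟩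
  exact hD.not_lt_min hne ⟨hx1, hx2.le.trans (hD.min_mem hne).2⟩ hx2

theorem infinite_rat_btwn {a b : ℝ} (h : a < b) :
    {q : ℚ | a < (q : ℝ) ∧ (q : ℝ) < b}.Infinite := by
  obtain ⟨p, hap, hpb⟩ := exists_rat_btwn h
  obtain ⟨r, hpr, hrb⟩ := exists_rat_btwn hpb
  have hpr' : p < r := by exact_mod_cast hpr
  refine (Set.Ioo_infinite hpr').mono ?_
  intro q hq
  constructor
  · exact hap.trans (by exact_mod_cast hq.1)
  · exact lt_trans (by exact_mod_cast hq.2 : (q : ℝ) < (r : ℝ)) hrb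

theorem exists_injective_mem {I : ℕ → Set ℚ} (hI : ∀ n, (I n).Infinite) :
    ∃ h : ℕ → ℚ, (∀ n, h n ∈ I n) ∧ Function.Injective h := by
  let L : ℕ → List ℚ := fun n =>
    Nat.rec [] (fun m l => l ++ [((hI m).diff l.finite_toSet).nonempty.some]) n
  have hLsucc : ∀ n, L (n + 1) = L n ++ [((hI n).diff (L n).finite_toSet).nonempty.some] :=
    fun _ => rfl
  set h : ℕ → ℚ := fun n => ((hI n).diff (L n).finite_toSet).nonempty.some with hh
  have hmemI : ∀ n, h n ∈ I n ∧ h n ∉ {x : ℚ | x ∈ L n} :=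
    fun n => ((hI n).diff (L n).finite_toSet).nonempty.some_mem
  have hmono : ∀ n, ∀ x : ℚ, x ∈ L n → x ∈ L (n + 1) := by
    intro n x hx
    rw [hLsucc]
    exact List.mem_append_left _ hx
  have hin : ∀ m n, m < n → h m ∈ L n := by
    intro m n hmn
    induction n with
    | zero => omega
    | succ k ih =>
      rcases Nat.lt_succ_iff_lt_or_eq.mp hmn with h' | h'
      · exact hmono k _ (ih h')
      · subst h'
        rw [hLsucc]
        exact List.mem_append_right _ (List.mem_singleton.mpr rfl)
  refine ⟨h, fun n => (hmemI n).1, fun a b hab => ?_⟩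
  by_contra hne
  rcases lt_or_gt_of_ne hne with hl | hl
  · exact (hmemI b).2 (by rw [Set.mem_setOf_eq, ← hab]; exact hin a b hl)
  · exact (hmemI a).2 (by rw [Set.mem_setOf_eq, hab]; exact hin b a hl)

theorem exists_q {T : Type w} [TreeOrder T] (hT : ∀ t : T, {s : T | t ⋖ s}.Countable)
    (f : T → ℝ) (hf : StrictMono f) :
    ∃ q : T → ℚ, (∀ m r : T, m ⋖ r → f m < (q r : ℝ) ∧ (q r : ℝ) < f r) ∧
      (∀ m r r' : T, m ⋖ r → m ⋖ r' → r ≠ r' → q r ≠ q r') := by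
  classical
  have claim : ∀ m : T, ∃ qm : T → ℚ,
      (∀ r, m ⋖ r → f m < (qm r : ℝ) ∧ (qm r : ℝ) < f r) ∧ Set.InjOn qm {r : T | m ⋖ r} := by
    intro m
    rcases Set.eq_empty_or_nonempty {s : T | m ⋖ s} with he | hne
    · have hno : ∀ r : T, ¬ m ⋖ r := fun r hr =>
        (Set.eq_empty_iff_forall_notMem.mp he r) hr
      exact ⟨fun _ => 0, fun r hr => (hno r hr).elim, fun a ha => (hno a ha).elim⟩
    · obtain ⟨g, hg⟩ := (hT m).exists_eq_range hne
      have hlt : ∀ n, f m < f (g n) := by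
        intro n
        have hgn : g n ∈ {s : T | m ⋖ s} := hg ▸ Set.mem_range_self n
        exact hf hgn.1
      obtain ⟨h, hmem, hinj⟩ := exists_injective_mem
        (I := fun n => {q : ℚ | f m < (q : ℝ) ∧ (q : ℝ) < f (g n)})
        (fun n => infinite_rat_btwn (hlt n))
      refine ⟨fun r => if hr : ∃ n, g n = r then h (Nat.find hr) else 0, ?_, ?_⟩
      · intro r hr
        have hex : ∃ n, g n = r := by
          have : r ∈ Set.range g := hg ▸ (hr : r ∈ {s : T | m ⋖ s})
          exact this
        simp only [dif_pos hex]
        have hm := hmem (Nat.find hex)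
        rw [Set.mem_setOf_eq, Nat.find_spec hex] at hm
        exact hm
      · intro a ha b hb hab
        have hexa : ∃ n, g n = a := by
          have : a ∈ Set.range g := hg ▸ (ha : a ∈ {s : T | m ⋖ s})
          exact this
        have hexb : ∃ n, g n = b := by
          have : b ∈ Set.range g := hg ▸ (hb : b ∈ {s : T | m ⋖ s})
          exact this
        simp only [dif_pos hexa, dif_pos hexb] at hab
        have hfind := hinj hab
        rw [← Nat.find_spec hexa, ← Nat.find_spec hexb, hfind]
  choose qm hqm1 hqm2 using claim
  refine ⟨fun r => if hr : ∃ m : T, m ⋖ r then qm (Classical.choose hr) r else 0, ?_, ?_⟩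
  · intro m r hmr
    have hex : ∃ m' : T, m' ⋖ r := ⟨m, hmr⟩
    simp only [dif_pos hex]
    rw [TreeOrder.covBy_unique (Classical.choose_spec hex) hmr]
    exact hqm1 m r hmr
  · intro m r r' h1 h2 hne
    have hex : ∃ m' : T, m' ⋖ r := ⟨m, h1⟩
    have hex' : ∃ m' : T, m' ⋖ r' := ⟨m, h2⟩
    simp only [dif_pos hex, dif_pos hex']
    rw [TreeOrder.covBy_unique (Classical.choose_spec hex) h1,
      TreeOrder.covBy_unique (Classical.choose_spec hex') h2]
    exact fun hq => hne (hqm2 m h1 h2 hq)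

end Aux

/-- Every countably branching tree with a strictly order-preserving map `f` into `ℝ`
admits a tree embedding `ψ` into `σℚ` whose image is an initial subtree of `σℚ` and
such that `f(t) ≥ sup ψ(t)` for every `t`. -/


theorem exists_treeEmbedding_sigmaQ {T : Type u} [TreeOrder T]
    (hT : ∀ t : T, {s : T | t ⋖ s}.Countable) (f : T → ℝ) (hf : StrictMono f) :
    ∃ ψ : T → sigmaQ, Function.Injective ψ ∧
      (∀ s t : T, s < t ↔ ψ s < ψ t) ∧
      (∀ (x : sigmaQ) (t : T), x ≤ ψ t → ∃ s : T, ψ s = x) ∧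
      (∀ t : T, ∀ q ∈ (ψ t).1, (q : ℝ) ≤ f t) := by
  classical
  obtain ⟨q, hq1, hq2⟩ := exists_q hT f hf
  have hfm : Monotone f := hf.monotone
  set S : T → Set T := fun t => {r : T | r ≤ t ∧ ∃ m : T, m ⋖ r} with hS
  have q_lt_f : ∀ {m r : T}, m ⋖ r → (q r : ℝ) < f r := fun h => (hq1 _ _ h).2
  have f_lt_q : ∀ {m r : T}, m ⋖ r → f m < (q r : ℝ) := fun h => (hq1 _ _ h).1
  have qmono : ∀ {r r' : T}, (∃ m : T, m ⋖ r) → (∃ m : T, m ⋖ r') → r < r' →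
      (q r : ℝ) < q r' := by
    rintro r r' ⟨m, hm⟩ ⟨m', hm'⟩ hlt
    have hrm' : r ≤ m' := TreeOrder.le_of_lt_covBy hm' hlt
    calc (q r : ℝ) < f r := q_lt_f hm
      _ ≤ f m' := hfm hrm'
      _ < q r' := f_lt_q hm'
  have memS_lt_f : ∀ {t r : T}, r ∈ S t → (q r : ℝ) < f t := by
    rintro t r ⟨hrt, m, hm⟩
    exact lt_of_lt_of_le (q_lt_f hm) (hfm hrt)
  have hWF : ∀ t : T, (q '' S t).IsWF := by
    intro t
    rw [Set.isWF_iff_no_descending_seq]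
    intro u hu hmem
    choose r hrS hrq using fun n => hmem n
    have hrq' : ∀ n : ℕ, q (r n) = u n := fun n => hrq n
    have hstep : ∀ n : ℕ, r (n + 1) < r n := by
      intro n
      rcases TreeOrder.comparable_of_le (hrS (n + 1)).1 (hrS n).1 with h1 | h1
      · rcases eq_or_lt_of_le h1 with heq | hlt
        · exfalso
          have : u (n + 1) = u n := by rw [← hrq' (n + 1), ← hrq' n, heq]
          exact absurd this (ne_of_lt (hu (Nat.lt_succ_self n)))
        · exact hlt
      · exfalso
        rcases eq_or_lt_of_le h1 with heq | hlt
        · have : u (n + 1) = u n := by rw [← hrq' (n + 1), ← hrq' n, heq]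
          exact absurd this (ne_of_lt (hu (Nat.lt_succ_self n)))
        · have h2 : (q (r n) : ℝ) < q (r (n + 1)) := qmono (hrS n).2 (hrS (n + 1)).2 hlt
          rw [hrq' n, hrq' (n + 1)] at h2
          have h3 : u (n + 1) < u n := hu (Nat.lt_succ_self n)
          have h4 : (u (n + 1) : ℝ) < u n := by exact_mod_cast h3
          linarith
    have hanti : StrictAnti r := strictAnti_nat_of_succ_lt hstep
    exact (Set.isWF_iff_no_descending_seq.mp (TreeOrder.isWF_le t)) r hanti
      (fun n => (hrS n).1)
  have hBdd : ∀ t : T, BddAbove (q '' S t) := by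
    intro t
    obtain ⟨Q, hQ⟩ := exists_rat_gt (f t)
    refine ⟨Q, ?_⟩
    rintro x ⟨r, hr, rfl⟩
    have hx : (q r : ℝ) < Q := (memS_lt_f hr).trans hQ
    exact_mod_cast hx.le
  set ψ : T → sigmaQ := fun t => ⟨q '' S t, hWF t, hBdd t⟩ with hψ
  have hpsi_mono : ∀ {s t : T}, s ≤ t → QInitSeg (q '' S s) (q '' S t) := by
    intro s t hst
    constructor
    · exact Set.image_mono (f := q) (fun r hr => ⟨hr.1.trans hst, hr.2⟩)
    · rintro x ⟨r, hr, rfl⟩ y ⟨r', hr', rfl⟩ hy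
      have hr's : ¬ r' ≤ s := fun hle => hy ⟨r', ⟨hle, hr'.2⟩, rfl⟩
      have hsr' : s < r' := by
        rcases TreeOrder.comparable_of_le hr'.1 hst with h1 | h1
        · exact absurd h1 hr's
        · exact lt_of_le_of_ne h1 (fun h => hr's (h ▸ le_rfl))
      obtain ⟨m', hm'⟩ := hr'.2
      obtain ⟨m, hm⟩ := hr.2
      have hrm' : r ≤ m' := hr.1.trans (TreeOrder.le_of_lt_covBy hm' hsr')
      have hlt : (q r : ℝ) < q r' := by
        calc (q r : ℝ) < f r := q_lt_f hm
          _ ≤ f m' := hfm hrm'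
          _ < q r' := f_lt_q hm'
      exact_mod_cast hlt.le
  have hpsi_ne : ∀ {s t : T}, s < t → q '' S s ≠ q '' S t := by
    intro s t hst hEq
    obtain ⟨c, hc, hct⟩ := TreeOrder.exists_covBy_le hst
    have hcS : c ∈ S t := ⟨hct, ⟨s, hc⟩⟩
    have hmem : q c ∈ q '' S s := hEq ▸ Set.mem_image_of_mem q hcS
    obtain ⟨r, hr, hqr⟩ := hmem
    obtain ⟨m, hm⟩ := hr.2
    have hlt : (q r : ℝ) < q c := by
      calc (q r : ℝ) < f r := q_lt_f hm
        _ ≤ f s := hfm hr.1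
        _ < q c := f_lt_q hc
    rw [hqr] at hlt
    exact lt_irrefl _ hlt
  have hinj : Function.Injective ψ := by
    intro s t hEq
    have hEq' : q '' S s = q '' S t := congrArg Subtype.val hEq
    by_contra hne
    have hst : ¬ s ≤ t := by
      intro h
      exact hpsi_ne (lt_of_le_of_ne h hne) hEq'
    have hts : ¬ t ≤ s := by
      intro h
      exact hpsi_ne (lt_of_le_of_ne h (Ne.symm hne)) hEq'.symm
    have hms : s ⊓ t < s := lt_of_le_of_ne inf_le_left (fun h => hst (h ▸ inf_le_right))
    have hmt : s ⊓ t < t :=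
      lt_of_le_of_ne inf_le_right (fun h => hts (h ▸ inf_le_left))
    obtain ⟨cs, hcs, hcss⟩ := TreeOrder.exists_covBy_le hms
    obtain ⟨ct, hct, hctt⟩ := TreeOrder.exists_covBy_le hmt
    have hcsct : cs ≠ ct := by
      intro h
      exact absurd (le_inf hcss (h ▸ hctt)) (not_le_of_gt hcs.1)
    have key : ∀ (b ca cb : T), s ⊓ t ⋖ ca → s ⊓ t ⋖ cb → cb ≤ b →
        q ca ∈ q '' S b → q ca = q cb ∨ (f cb : ℝ) < q ca := by
      intro b ca cb hca hcb hcbb hmem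
      obtain ⟨r, hrS, hqr⟩ := hmem
      have hrb : r ≤ b := hrS.1
      obtain ⟨mr, hmr⟩ := hrS.2
      have hmb : s ⊓ t ≤ b := le_trans hcb.1.le hcbb
      have hrm : ¬ r ≤ s ⊓ t := by
        intro hle
        have hlt : (q r : ℝ) < q ca := by
          calc (q r : ℝ) < f r := q_lt_f hmr
            _ ≤ f (s ⊓ t) := hfm hle
            _ < q ca := f_lt_q hca
        rw [hqr] at hlt
        exact lt_irrefl _ hlt
      have hmr' : s ⊓ t < r := by
        rcases TreeOrder.comparable_of_le hrb hmb with h1 | h1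
        · exact absurd h1 hrm
        · exact lt_of_le_of_ne h1 (fun h => hrm (h ▸ le_rfl))
      rcases TreeOrder.comparable_of_le hrb hcbb with h2 | h2
      · rcases eq_or_lt_of_le h2 with heq | h3
        · subst heq
          exact Or.inl hqr.symm
        · exact absurd h3 (hcb.2 hmr')
      · rcases eq_or_lt_of_le h2 with heq | h3
        · subst heq
          exact Or.inl hqr.symm
        · have hcbmr : cb ≤ mr := TreeOrder.le_of_lt_covBy hmr h3
          refine Or.inr ?_
          calc (f cb : ℝ) ≤ f mr := hfm hcbmr
            _ < q r := f_lt_q hmr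
            _ = q ca := by rw [hqr]
    have h1 := key t cs ct hcs hct hctt
      (hEq' ▸ Set.mem_image_of_mem q (⟨hcss, ⟨s ⊓ t, hcs⟩⟩ : cs ∈ S s))
    have h2 := key s ct cs hct hcs hcss
      (hEq'.symm ▸ Set.mem_image_of_mem q (⟨hctt, ⟨s ⊓ t, hct⟩⟩ : ct ∈ S t))
    rcases h1 with h1 | h1
    · exact hq2 _ _ _ hcs hct hcsct h1
    rcases h2 with h2 | h2
    · exact hq2 _ _ _ hct hcs (Ne.symm hcsct) h2
    have h3 := q_lt_f hcs
    have h4 := q_lt_f hct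
    exact lt_irrefl _ (((h3.trans h2).trans h4).trans h1)
  have hcond : ∀ (x : sigmaQ) (t : T), x ≤ ψ t → ∃ s : T, s ≤ t ∧ ψ s = x := by
    intro x t hx
    have hx1 : x.1 ⊆ q '' S t := hx.1
    by_cases hB : ∃ r ∈ S t, q r ∉ x.1
    · have hBwf : {r : T | r ∈ S t ∧ q r ∉ x.1}.IsWF :=
        (TreeOrder.isWF_le t).mono (fun r hr => hr.1.1)
      have hBne : {r : T | r ∈ S t ∧ q r ∉ x.1}.Nonempty := by
        obtain ⟨r, hr1, hr2⟩ := hB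
        exact ⟨r, hr1, hr2⟩
      set r₀ : T := hBwf.min hBne with hr₀def
      have hr₀ : r₀ ∈ S t ∧ q r₀ ∉ x.1 := hBwf.min_mem hBne
      obtain ⟨m₀, hm₀⟩ := hr₀.1.2
      refine ⟨m₀, le_trans hm₀.1.le hr₀.1.1, Subtype.ext ?_⟩
      show q '' S m₀ = x.1
      apply Set.Subset.antisymm
      · rintro ξ ⟨r, hr, rfl⟩
        have hrt : r ∈ S t := ⟨hr.1.trans (hm₀.1.le.trans hr₀.1.1), hr.2⟩
        by_contra hnot
        have hmem : r ∈ {r : T | r ∈ S t ∧ q r ∉ x.1} := ⟨hrt, hnot⟩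
        exact hBwf.not_lt_min hBne hmem (lt_of_le_of_lt hr.1 hm₀.1)
      · intro ξ hξ
        obtain ⟨r, hrS, rfl⟩ := hx1 hξ
        refine ⟨r, ⟨?_, hrS.2⟩, rfl⟩
        have hne : r ≠ r₀ := fun h => hr₀.2 (h ▸ hξ)
        rcases TreeOrder.comparable_of_le hrS.1 hr₀.1.1 with h1 | h1
        · exact TreeOrder.le_of_lt_covBy hm₀ (lt_of_le_of_ne h1 hne)
        · exfalso
          have hlt : r₀ < r := lt_of_le_of_ne h1 (Ne.symm hne)
          have hqlt : (q r₀ : ℝ) < q r := qmono hr₀.1.2 hrS.2 hlt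
          have hq' : q r ≤ q r₀ :=
            hx.2 (q r) hξ (q r₀) (Set.mem_image_of_mem q hr₀.1) hr₀.2
          have hq'' : (q r : ℝ) ≤ q r₀ := by exact_mod_cast hq'
          linarith
    · push_neg at hB
      refine ⟨t, le_rfl, Subtype.ext ?_⟩
      show q '' S t = x.1
      apply Set.Subset.antisymm
      · rintro ξ ⟨r, hr, rfl⟩
        exact hB r hr
      · exact hx1
  refine ⟨ψ, hinj, ?_, ?_, ?_⟩
  · intro s t
    constructor
    · intro hst
      refine lt_of_le_of_ne ?_ (fun h => hpsi_ne hst (congrArg Subtype.val h))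
      show QInitSeg (q '' S s) (q '' S t)
      exact hpsi_mono hst.le
    · intro hst
      obtain ⟨s', hs't, hs'⟩ := hcond (ψ s) t hst.le
      have hss' : s' = s := hinj hs'
      refine lt_of_le_of_ne (hss' ▸ hs't) ?_
      intro h
      exact hst.ne (congrArg ψ h)
  · intro x t hx
    obtain ⟨s, _, hs⟩ := hcond x t hx
    exact ⟨s, hs⟩
  · intro t p hp
    obtain ⟨r, hr, rfl⟩ := hp
    exact (memS_lt_f hr).le
end

section
/- There is no strictly order-preserving function from the tree σQ into the rationals Q; that is, σQ is not Q-embeddable (not special). -/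
open Filter Topology Set

universe u v

/-- A fixed enumeration of the rationals. -/
noncomputable def eQ : ℕ → ℚ := fun n => (Denumerable.eqv ℚ).symm n

/-- The state of Kurepa's diagonal construction: a well-ordered set `s` of rationals,
a strict rational upper bound `b` for `s`, and a "working bound" `x > b`. -/
structure KState where
  s : Set ℚ
  b : ℚ
  x : ℚ
  wf : s.IsWF
  sub : s ⊆ Set.Iio b
  blt : b < x

/-- The predicate handled at stage `n`: there is an extension of the current set,
bounded strictly below the working bound, on which `f` takes the value `eQ n`. -/
def KP (f : sigmaQ → ℚ) (n : ℕ) (st : KState) : Prop :=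
  ∃ t : sigmaQ, ∃ c : ℚ, QInitSeg st.s t.1 ∧ f t = eQ n ∧ c < st.x ∧ t.1 ⊆ Set.Iio c

theorem exists_next (f : sigmaQ → ℚ) (n : ℕ) (st : KState) :
    ∃ st' : KState, QInitSeg st.s st'.s ∧ st'.x ≤ st.x ∧
      (KP f n st → ∃ t : sigmaQ, f t = eQ n ∧ QInitSeg t.1 st'.s ∧
        ∃ r, r ∈ st'.s ∧ r ∉ t.1) ∧
      (¬ KP f n st → st'.x < st.x ∧ st'.b = st.b) := by
  by_cases h : KP f n st
  · obtain ⟨t, c, hst, hft, hcx, htc⟩ := h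
    have hwf : (insert c t.1).IsWF := t.2.1.insert c
    have hsub : insert c t.1 ⊆ Set.Iio ((c + st.x) / 2) := by
      intro y hy
      rcases hy with rfl | hy
      · exact Set.mem_Iio.2 (by linarith)
      · have := Set.mem_Iio.1 (htc hy)
        exact Set.mem_Iio.2 (by linarith)
    refine ⟨⟨insert c t.1, (c + st.x) / 2, st.x, hwf, hsub, by linarith⟩, ?_, le_rfl,
      fun _ => ⟨t, hft, ?_, c, Set.mem_insert _ _,
        fun hc => (Set.mem_Iio.1 (htc hc)).false⟩,
      fun hn => absurd ⟨t, c, hst, hft, hcx, htc⟩ hn⟩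
    · refine ⟨fun y hy => Set.mem_insert_of_mem _ (hst.1 hy), ?_⟩
      intro a ha y hy hyn
      rcases hy with rfl | hy
      · exact le_of_lt (Set.mem_Iio.1 (htc (hst.1 ha)))
      · exact hst.2 a ha y hy hyn
    · refine ⟨fun y hy => Set.mem_insert_of_mem _ hy, ?_⟩
      intro a ha y hy hyn
      rcases hy with rfl | hy
      · exact le_of_lt (Set.mem_Iio.1 (htc ha))
      · exact absurd hy hyn
  · have hb := st.blt
    exact ⟨⟨st.s, st.b, (st.b + st.x) / 2, st.wf, st.sub, by linarith⟩,
      QInitSeg.refl _, by simp only []; linarith, fun hk => absurd hk h,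
      fun _ => ⟨by simp only []; linarith, rfl⟩⟩

/-- The diagonal sequence of states. -/
noncomputable def kseq (f : sigmaQ → ℚ) : ℕ → KState := fun n =>
  Nat.rec ⟨∅, 0, 1, Set.isWF_empty, Set.empty_subset _, zero_lt_one⟩
    (fun n st => (exists_next f n st).choose) n

theorem kseq_spec (f : sigmaQ → ℚ) (n : ℕ) :
    QInitSeg (kseq f n).s (kseq f (n + 1)).s ∧ (kseq f (n + 1)).x ≤ (kseq f n).x ∧
      (KP f n (kseq f n) → ∃ t : sigmaQ, f t = eQ n ∧ QInitSeg t.1 (kseq f (n + 1)).s ∧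
        ∃ r, r ∈ (kseq f (n + 1)).s ∧ r ∉ t.1) ∧
      (¬ KP f n (kseq f n) → (kseq f (n + 1)).x < (kseq f n).x ∧
        (kseq f (n + 1)).b = (kseq f n).b) :=
  (exists_next f n (kseq f n)).choose_spec

/-- Kurepa's theorem: the tree `σℚ` is not `ℚ`-embeddable (not special): there is no
strictly order-preserving map from `σℚ` to `ℚ`. -/
theorem sigmaQ_not_special : ¬ ∃ f : sigmaQ → ℚ, StrictMono f := by
  rintro ⟨f, hf⟩
  set K := kseq f with hK
  -- the chain property
  have hchain : ∀ m n, m ≤ n → QInitSeg (K m).s (K n).s := by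
    intro m n h
    induction n with
    | zero =>
      obtain rfl : m = 0 := Nat.le_zero.mp h
      exact QInitSeg.refl _
    | succ n ih =>
      rcases Nat.lt_succ_iff_lt_or_eq.mp (Nat.lt_succ_of_le h) with h' | rfl
      · exact (ih (Nat.lt_succ_iff.mp h')).trans' (kseq_spec f n).1
      · exact QInitSeg.refl _
  have hxmono : ∀ m n, m ≤ n → (K n).x ≤ (K m).x := by
    intro m n h
    induction n with
    | zero =>
      obtain rfl : m = 0 := Nat.le_zero.mp h
      exact le_rfl
    | succ n ih =>
      rcases Nat.lt_succ_iff_lt_or_eq.mp (Nat.lt_succ_of_le h) with h' | rfl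
      · exact le_trans (kseq_spec f n).2.1 (ih (Nat.lt_succ_iff.mp h'))
      · exact le_rfl
  -- the union of the chain
  set T : Set ℚ := ⋃ n, (K n).s with hT
  have hTwf : T.IsWF := by
    rw [Set.isWF_iff_no_descending_seq]
    intro g hg hmem
    obtain ⟨k, hk⟩ := Set.mem_iUnion.1 (hmem 0)
    have hin : ∀ n, g n ∈ (K k).s := by
      intro n
      obtain ⟨m, hm⟩ := Set.mem_iUnion.1 (hmem n)
      by_cases hmk : g n ∈ (K k).s
      · exact hmk
      · rcases le_total m k with h' | h'
        · exact absurd ((hchain m k h').1 hm) hmk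
        · have hle : g 0 ≤ g n := (hchain k m h').2 (g 0) hk (g n) hm hmk
          rcases Nat.eq_zero_or_pos n with rfl | hn
          · exact absurd hk hmk
          · exact absurd hle (not_le.2 (hg hn))
    exact Set.isWF_iff_no_descending_seq.1 (K k).wf g hg hin
  have hTbdd : BddAbove T := by
    refine ⟨(K 0).x, fun y hy => ?_⟩
    obtain ⟨m, hm⟩ := Set.mem_iUnion.1 hy
    have h1 := Set.mem_Iio.1 ((K m).sub hm)
    have h2 := (K m).blt
    have h3 := hxmono 0 m (Nat.zero_le m)
    linarith
  set Tσ : sigmaQ := ⟨T, hTwf, hTbdd⟩ with hTσ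
  have hKT : ∀ m, QInitSeg (K m).s T := by
    intro m
    refine ⟨fun y hy => Set.mem_iUnion.2 ⟨m, hy⟩, ?_⟩
    intro a ha y hy hyn
    obtain ⟨j, hj⟩ := Set.mem_iUnion.1 hy
    rcases le_total j m with h' | h'
    · exact absurd ((hchain j m h').1 hj) hyn
    · exact (hchain m j h').2 a ha y hj hyn
  set n : ℕ := Denumerable.eqv ℚ (f Tσ) with hn
  have hen : eQ n = f Tσ := by
    simp only [eQ, hn, Equiv.symm_apply_apply]
  by_cases hkp : KP f n (K n)
  · obtain ⟨t, hft, htle, r, hrmem, hrnot⟩ := (kseq_spec f n).2.2.1 hkp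
    have hle : t ≤ Tσ := htle.trans' (hKT (n + 1))
    have hne : t ≠ Tσ := by
      intro h
      apply hrnot
      have : r ∈ T := Set.mem_iUnion.2 ⟨n + 1, hrmem⟩
      rw [h]
      exact this
    have hlt : f t < f Tσ := hf (lt_of_le_of_ne hle hne)
    rw [hft, hen] at hlt
    exact lt_irrefl _ hlt
  · have hxlt := ((kseq_spec f n).2.2.2 hkp).1
    apply hkp
    refine ⟨Tσ, (K (n + 1)).x, hKT n, hen.symm, hxlt, ?_⟩
    intro y hy
    obtain ⟨m, hm⟩ := Set.mem_iUnion.1 hy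
    rcases le_total m (n + 1) with h' | h'
    · have hy' : y ∈ (K (n + 1)).s := (hchain m (n + 1) h').1 hm
      have h1 := Set.mem_Iio.1 ((K (n + 1)).sub hy')
      have h2 := (K (n + 1)).blt
      exact Set.mem_Iio.2 (by linarith)
    · have h1 := Set.mem_Iio.1 ((K m).sub hm)
      have h2 := (K m).blt
      have h3 := hxmono (n + 1) m h'
      exact Set.mem_Iio.2 (by linarith)
end

section
/- The one-point compactification A(wQ) of the tree wQ of all well-ordered subsets of the rationals is Rosenthal compact; in fact, setting A_t = {x ∈ P(Q) : t is an initial segment of x} for t ∈ wQ, the family {A_t : t ∈ wQ} is a proper tree of sets whose members are simultaneously F_σ and G_δ subsets of the Cantor set P(Q), so that A(wQ) is homeomorphic to {1_{A_t} : t ∈ wQ} ∪ {0} ⊆ B₁(P(Q)). -/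
open Filter Topology Set

universe u v

/-- A proper tree of sets: all members are nonempty and pairwise distinct. -/
def IsProperTreeOfSets {T : Type u} [PartialOrder T] {X : Type v} (A : T → Set X) : Prop :=
  IsTreeOfSets A ∧ (∀ t : T, (A t).Nonempty) ∧ Function.Injective A

/-- The tree `wℚ` of all well-ordered subsets of `ℚ`. -/
def wQ : Type := {s : Set ℚ // s.IsWF}

/-- `wℚ` is ordered by "being an initial segment". -/
instance : PartialOrder wQ where
  le s t := QInitSeg s.1 t.1
  le_refl s := QInitSeg.refl s.1
  le_trans _ _ _ h1 h2 := QInitSeg.trans' h1 h2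
  le_antisymm _ _ h1 h2 := Subtype.ext (QInitSeg.antisymm' h1 h2)

instance : TopologicalSpace wQ := intervalTopology wQ

/-- The set `A_t = {x ⊆ ℚ : t is an initial segment of x}`, as a subset of the Cantor
set `2^ℚ`. -/
def wqSets (t : wQ) : Set (ℚ → Bool) := {x : ℚ → Bool | QInitSeg t.1 {q : ℚ | x q = true}}

/-- The characteristic function `1_{A_t}` of `A_t`, a real function on the Cantor set. -/
noncomputable def wqChar (t : wQ) : (ℚ → Bool) → ℝ := (wqSets t).indicator fun _ => (1 : ℝ)

section Aux

open OnePoint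

lemma wq_le_def {s t : wQ} : s ≤ t ↔ QInitSeg s.1 t.1 := Iff.rfl

lemma mem_wqSets {t : wQ} {x : ℚ → Bool} :
    x ∈ wqSets t ↔ QInitSeg t.1 {q : ℚ | x q = true} := Iff.rfl

lemma initSeg_comparable {s t X : Set ℚ} (hs : QInitSeg s X) (ht : QInitSeg t X) :
    QInitSeg s t ∨ QInitSeg t s := by
  by_cases hsub : s ⊆ t
  · exact Or.inl ⟨hsub, fun x hx y hy hyn => hs.2 x hx y (ht.1 hy) hyn⟩
  · obtain ⟨a, ha, hat⟩ := not_subset.1 hsub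
    right
    have htsub : t ⊆ s := by
      intro b hb
      by_contra hbs
      have h1 : a ≤ b := hs.2 a ha b (ht.1 hb) hbs
      have h2 : b ≤ a := ht.2 b hb a (hs.1 ha) hat
      have : a = b := le_antisymm h1 h2
      exact hbs (this ▸ ha)
    exact ⟨htsub, fun x hx y hy hyn => ht.2 x hx y (hs.1 hy) hyn⟩

/-- The chain of well-ordered initial segments of a fixed set `X ⊆ ℚ`. -/
def Dset (X : Set ℚ) : Set wQ := {t : wQ | QInitSeg t.1 X}

lemma Dset_down {X : Set ℚ} {s t : wQ} (hst : s ≤ t) (ht : t ∈ Dset X) : s ∈ Dset X :=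
  QInitSeg.trans' hst ht

lemma Dset_chain {X : Set ℚ} {s t : wQ} (hs : s ∈ Dset X) (ht : t ∈ Dset X) :
    s ≤ t ∨ t ≤ s :=
  initSeg_comparable hs ht

lemma Dset_exists_max (X : Set ℚ) :
    ∃ m : wQ, m ∈ Dset X ∧ ∀ s ∈ Dset X, s ≤ m := by
  have hmemU : ∀ q : ℚ, q ∈ (⋃ s ∈ Dset X, (s : wQ).1) ↔ ∃ s ∈ Dset X, q ∈ s.1 := by
    intro q; simp [Set.mem_iUnion]
  have hUwf : (⋃ s ∈ Dset X, (s : wQ).1).IsWF := by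
    rw [Set.isWF_iff_no_descending_seq]
    intro f hf hmem
    obtain ⟨s0, hs0, hf0⟩ := (hmemU (f 0)).1 (hmem 0)
    have hall : ∀ n, f n ∈ s0.1 := by
      intro n
      induction n with
      | zero => exact hf0
      | succ n ih =>
        obtain ⟨s', hs', hfs'⟩ := (hmemU (f (n + 1))).1 (hmem (n + 1))
        rcases Dset_chain hs' hs0 with h | h
        · exact h.1 hfs'
        · by_contra hns
          have := h.2 (f n) ih (f (n + 1)) hfs' hns
          exact absurd (hf (Nat.lt_succ_self n)) (not_lt.2 this)
    exact (Set.isWF_iff_no_descending_seq.1 s0.2) f hf (fun n => hall n)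
  refine ⟨⟨_, hUwf⟩, ⟨?_, ?_⟩, ?_⟩
  · intro q hq
    obtain ⟨s, hs, hqs⟩ := (hmemU q).1 hq
    exact hs.1 hqs
  · intro a ha y hy hyn
    obtain ⟨s, hs, has⟩ := (hmemU a).1 ha
    exact hs.2 a has y hy (fun h => hyn ((hmemU y).2 ⟨s, hs, h⟩))
  · intro s hs
    refine ⟨fun q hq => (hmemU q).2 ⟨s, hs, hq⟩, ?_⟩
    intro a ha y hy hyn
    obtain ⟨s', hs', hys'⟩ := (hmemU y).1 hy
    rcases Dset_chain hs' hs with h | h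
    · exact absurd (h.1 hys') hyn
    · exact h.2 a ha y hys' hyn

lemma Dset_wfOn (X : Set ℚ) :
    (Dset X).WellFoundedOn ((· < ·) : wQ → wQ → Prop) := by
  rw [Set.wellFoundedOn_iff_no_descending_seq]
  intro f hmem
  have hdec : ∀ n : ℕ, f (n + 1) < f n := fun n => f.map_rel_iff.2 (Nat.lt_succ_self n)
  have hss : ∀ n, (f (n + 1)).1 ⊆ (f n).1 := fun n => (le_of_lt (hdec n)).1
  have hex : ∀ n, ∃ q, q ∈ (f n).1 ∧ q ∉ (f (n + 1)).1 := by
    intro n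
    by_contra h
    push_neg at h
    exact (ne_of_lt (hdec n)) (Subtype.ext (Set.Subset.antisymm (hss n) (fun q hq => h q hq)))
  choose q hq1 hq2 using hex
  have hanti : ∀ n, q (n + 1) < q n := by
    intro n
    have hle : q (n + 1) ≤ q n :=
      (le_of_lt (hdec n)).2 (q (n + 1)) (hq1 (n + 1)) (q n) (hq1 n) (hq2 n)
    exact lt_of_le_of_ne hle (fun h => (hq2 n) (h ▸ hq1 (n + 1)))
  have hmono : ∀ n, f n ≤ f 0 := by
    intro n
    induction n with
    | zero => exact le_refl _
    | succ n ih => exact le_trans (le_of_lt (hdec n)) ih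
  exact (Set.isWF_iff_no_descending_seq.1 (f 0).2) q (strictAnti_nat_of_succ_lt hanti)
    (fun n => (hmono n).1 (hq1 n))

lemma wq_isOpen_Iic (b : wQ) : IsOpen (Set.Iic b) :=
  TopologicalSpace.isOpen_generateFrom_of_mem (Or.inr ⟨b, rfl⟩)

lemma wq_isOpen_Ioc (a b : wQ) : IsOpen (Set.Ioc a b) :=
  TopologicalSpace.isOpen_generateFrom_of_mem (Or.inl ⟨a, b, rfl⟩)

lemma Dset_isOpen (X : Set ℚ) : IsOpen (Dset X) := by
  have h : Dset X = ⋃ t ∈ Dset X, Set.Iic t := by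
    ext s
    constructor
    · intro hs
      exact Set.mem_biUnion hs (le_refl s)
    · intro hs
      simp only [Set.mem_iUnion] at hs
      obtain ⟨t, ht, hst⟩ := hs
      exact Dset_down hst ht
  rw [h]
  exact isOpen_biUnion (fun t _ => wq_isOpen_Iic t)

lemma exists_diff {s u : wQ} (h : s < u) : ∃ r, r ∈ u.1 ∧ r ∉ s.1 := by
  by_contra hc
  push_neg at hc
  exact (ne_of_lt h) (Subtype.ext (Set.Subset.antisymm (le_of_lt h).1 (fun r hr => hc r hr)).symm).symm

lemma Dset_isClosed (X : Set ℚ) : IsClosed (Dset X) := by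
  rw [← isOpen_compl_iff, isOpen_iff_forall_mem_open]
  intro t ht
  rw [Set.mem_compl_iff] at ht
  by_cases hsub : t.1 ⊆ X
  · -- second condition of QInitSeg fails
    have hne : ¬ ∀ a ∈ t.1, ∀ y ∈ X, y ∉ t.1 → a ≤ y := fun h => ht ⟨hsub, h⟩
    push_neg at hne
    obtain ⟨a, ha, y, hyX, hyt, hay⟩ := hne
    have hya : y < a := hay
    set s : wQ := ⟨{r ∈ t.1 | r ≤ y}, t.2.mono (Set.sep_subset _ _)⟩ with hs
    have hst : s < t := by
      refine lt_of_le_of_ne ⟨Set.sep_subset _ _, ?_⟩ ?_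
      · rintro x ⟨hxt, hxy⟩ z hz hzn
        have : ¬ z ≤ y := fun h => hzn ⟨hz, h⟩
        exact le_trans hxy (le_of_lt (not_le.1 this))
      · intro h
        have : a ∈ s.1 := h ▸ ha
        exact absurd this.2 (not_le.2 hay)
    refine ⟨Set.Ioc s t, ?_, wq_isOpen_Ioc s t, ⟨hst, le_refl t⟩⟩
    intro u hu
    rw [Set.mem_compl_iff]
    intro hD
    obtain ⟨r, hru, hrs⟩ := exists_diff hu.1
    have hrt : r ∈ t.1 := hu.2.1 hru
    have hyr : y < r := not_le.1 (fun h => hrs ⟨hrt, h⟩)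
    have hynu : y ∉ u.1 := fun h => hyt (hu.2.1 h)
    exact absurd (hD.2 r hru y hyX hynu) (not_le.2 hyr)
  · obtain ⟨q, hqt, hqX⟩ := not_subset.1 hsub
    set s : wQ := ⟨{r ∈ t.1 | r < q}, t.2.mono (Set.sep_subset _ _)⟩ with hs
    have hst : s < t := by
      refine lt_of_le_of_ne ⟨Set.sep_subset _ _, ?_⟩ ?_
      · rintro x ⟨hxt, hxq⟩ z hz hzn
        have : ¬ z < q := fun h => hzn ⟨hz, h⟩
        exact le_of_lt (lt_of_lt_of_le hxq (not_lt.1 this))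
      · intro h
        have : q ∈ s.1 := h ▸ hqt
        exact absurd this.2 (lt_irrefl q)
    refine ⟨Set.Ioc s t, ?_, wq_isOpen_Ioc s t, ⟨hst, le_refl t⟩⟩
    intro u hu
    rw [Set.mem_compl_iff]
    intro hD
    obtain ⟨r, hru, hrs⟩ := exists_diff hu.1
    have hrt : r ∈ t.1 := hu.2.1 hru
    have hqr : q ≤ r := not_lt.1 (fun h => hrs ⟨hrt, h⟩)
    have hqu : q ∈ u.1 := by
      rcases eq_or_lt_of_le hqr with heq | hlt
      · exact heq ▸ hru
      · by_contra hqu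
        exact absurd (hu.2.2 r hru q hqt hqu) (not_le.2 hlt)
    exact hqX (hD.1 hqu)

lemma Dset_isCompact (X : Set ℚ) : IsCompact (Dset X) := by
  rw [isCompact_iff_ultrafilter_le_nhds]
  intro F hF
  have hDF : Dset X ∈ F := Filter.le_principal_iff.1 hF
  obtain ⟨m, hm, hmax⟩ := Dset_exists_max X
  set W : Set wQ := {s : wQ | s ∈ Dset X ∧ Dset X ∩ Set.Iic s ∈ F} with hW
  have hWne : W.Nonempty := by
    refine ⟨m, hm, ?_⟩
    have heq : Dset X ∩ Set.Iic m = Dset X :=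
      Set.inter_eq_left.2 (fun s hs => hmax s hs)
    rw [heq]
    exact hDF
  have hwf : WellFounded (fun a b : wQ => a < b ∧ a ∈ Dset X ∧ b ∈ Dset X) :=
    Set.wellFoundedOn_iff.1 (Dset_wfOn X)
  obtain ⟨t, htW, hmin⟩ := hwf.has_min W hWne
  refine ⟨t, htW.1, ?_⟩
  have hnhds : (𝓝 t : Filter wQ) =
      ⨅ S ∈ {S : Set wQ | t ∈ S ∧ S ∈
        ({S : Set wQ | ∃ a b : wQ, S = Set.Ioc a b} ∪
         {S : Set wQ | ∃ b : wQ, S = Set.Iic b})}, 𝓟 S :=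
    TopologicalSpace.nhds_generateFrom
  rw [hnhds]
  refine le_iInf fun S => le_iInf fun hS => ?_
  rw [Filter.le_principal_iff]
  obtain ⟨htS, hgen⟩ := hS
  rcases hgen with ⟨a, b, rfl⟩ | ⟨b, rfl⟩
  · obtain ⟨hat, htb⟩ := htS
    have haD : a ∈ Dset X := Dset_down (le_of_lt hat) htW.1
    have haW : Dset X ∩ Set.Iic a ∉ F := by
      intro hmem
      exact hmin a ⟨haD, hmem⟩ ⟨hat, haD, htW.1⟩
    have hcompl : (Dset X ∩ Set.Iic a)ᶜ ∈ F := Ultrafilter.compl_mem_iff_notMem.2 haW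
    refine Filter.mem_of_superset (Filter.inter_mem htW.2 hcompl) ?_
    rintro u ⟨⟨huD, hut⟩, hu2⟩
    have hua : ¬ u ≤ a := fun h => hu2 ⟨huD, h⟩
    have hau : a < u := by
      rcases Dset_chain haD huD with h | h
      · exact lt_of_le_of_ne h (fun h' => hua (le_of_eq h'.symm))
      · exact absurd h hua
    exact ⟨hau, le_trans hut htb⟩
  · refine Filter.mem_of_superset htW.2 ?_
    rintro u ⟨_, hut⟩
    exact le_trans hut (Set.mem_Iic.mp htS)

end Aux

section Aux2

open OnePoint

lemma wqSets_eq (t : wQ) : wqSets t =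
    (⋂ a ∈ t.1, {x : ℚ → Bool | x a = true}) ∩
    (⋂ y ∈ {y : ℚ | y ∉ t.1 ∧ ∃ a ∈ t.1, y < a}, {x : ℚ → Bool | x y = false}) := by
  ext x
  simp only [wqSets, Set.mem_setOf_eq, Set.mem_inter_iff, Set.mem_iInter, QInitSeg]
  constructor
  · rintro ⟨h1, h2⟩
    refine ⟨fun a ha => h1 ha, fun y hy => ?_⟩
    obtain ⟨hyt, a, ha, hya⟩ := hy
    by_contra hxy
    have hxt : x y = true := by
      cases hb : x y
      · exact absurd hb hxy
      · rfl
    exact absurd (h2 a ha y hxt hyt) (not_le.2 hya)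
  · rintro ⟨h1, h2⟩
    refine ⟨fun q hq => h1 q hq, fun a ha y hy hyt => ?_⟩
    by_contra hay
    have hfalse : x y = false := h2 y ⟨hyt, a, ha, not_le.1 hay⟩
    rw [hfalse] at hy
    exact Bool.false_ne_true hy

lemma wqSets_isClosed (t : wQ) : IsClosed (wqSets t) := by
  rw [wqSets_eq]
  apply IsClosed.inter
  · exact isClosed_biInter (fun a _ => isClosed_eq (continuous_apply a) continuous_const)
  · exact isClosed_biInter (fun y _ => isClosed_eq (continuous_apply y) continuous_const)

open Classical in
/-- The characteristic function of a set of rationals, as a point of the Cantor set. -/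
noncomputable def chi (s : Set ℚ) : ℚ → Bool := fun q => decide (q ∈ s)

lemma chi_mem (s : Set ℚ) : {q : ℚ | chi s q = true} = s := by
  ext q
  simp [chi]

lemma chi_mem_wqSets (t : wQ) : chi t.1 ∈ wqSets t := by
  show QInitSeg t.1 {q : ℚ | chi t.1 q = true}
  rw [chi_mem]
  exact QInitSeg.refl t.1

lemma wqSets_nonempty (t : wQ) : (wqSets t).Nonempty := ⟨chi t.1, chi_mem_wqSets t⟩

lemma wqSets_injective : Function.Injective wqSets := by
  intro s t h
  have h1 : chi s.1 ∈ wqSets t := h ▸ chi_mem_wqSets s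
  have h2 : chi t.1 ∈ wqSets s := h.symm ▸ chi_mem_wqSets t
  rw [mem_wqSets, chi_mem] at h1 h2
  exact Subtype.ext (QInitSeg.antisymm' h2 h1)

lemma isTreeOfSets_wqSets : IsTreeOfSets wqSets where
  subset_of_le s t hts := fun _ hx => QInitSeg.trans' hts hx
  disjoint_of_incomp s t h1 h2 := by
    rw [Set.eq_empty_iff_forall_notMem]
    rintro x ⟨hxs, hxt⟩
    rcases initSeg_comparable (mem_wqSets.1 hxs) (mem_wqSets.1 hxt) with h | h
    · exact h1 h
    · exact h2 h
  iInter_chain := by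
    intro C _hne hchain t hlub
    have hub : ∀ s ∈ C, s ≤ t := fun s hs => hlub.1 hs
    have hsub : (⋃ s ∈ C, (s : wQ).1) ⊆ t.1 := by
      intro q hq
      simp only [Set.mem_iUnion] at hq
      obtain ⟨s, hs, hqs⟩ := hq
      exact (hub s hs).1 hqs
    set u : wQ := ⟨⋃ s ∈ C, (s : wQ).1, t.2.mono hsub⟩ with hu
    have huub : u ∈ upperBounds C := by
      intro s hs
      refine ⟨fun q hq => Set.mem_biUnion hs hq, ?_⟩
      intro a ha y hy hyn
      have hy' : y ∈ ⋃ s ∈ C, (s : wQ).1 := hy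
      simp only [Set.mem_iUnion] at hy'
      obtain ⟨s', hs', hys'⟩ := hy'
      rcases hchain.total hs hs' with h | h
      · exact h.2 a ha y hys' hyn
      · exact absurd (h.1 hys') hyn
    have htu : t ≤ u := hlub.2 huub
    have hteq : t.1 ⊆ ⋃ s ∈ C, (s : wQ).1 := htu.1
    ext x
    simp only [Set.mem_iInter]
    constructor
    · intro hx
      show QInitSeg t.1 {q : ℚ | x q = true}
      constructor
      · intro q hq
        have hq' := hteq hq
        simp only [Set.mem_iUnion] at hq'
        obtain ⟨s, hs, hqs⟩ := hq'
        exact (hx s hs).1 hqs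
      · intro a ha y hy hyn
        have ha' := hteq ha
        simp only [Set.mem_iUnion] at ha'
        obtain ⟨s, hs, has⟩ := ha'
        exact (hx s hs).2 a has y hy (fun h => hyn ((hub s hs).1 h))
    · intro hx s hs
      exact QInitSeg.trans' (hub s hs) hx
  iInter_unbounded := by
    intro C hne hchain hnb
    rw [Set.eq_empty_iff_forall_notMem]
    intro x hx
    simp only [Set.mem_iInter] at hx
    obtain ⟨m, _hm, hmax⟩ := Dset_exists_max {q : ℚ | x q = true}
    exact hnb ⟨m, fun s hs => hmax s (hx s hs)⟩

lemma wqChar_eq_indicator (x : ℚ → Bool) :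
    (fun t : wQ => wqChar t x) = (Dset {q : ℚ | x q = true}).indicator (fun _ => (1 : ℝ)) := by
  funext t
  by_cases h : QInitSeg t.1 {q : ℚ | x q = true}
  · have hx : x ∈ wqSets t := h
    have ht : t ∈ Dset {q : ℚ | x q = true} := h
    rw [wqChar, Set.indicator_of_mem hx, Set.indicator_of_mem ht]
  · have hx : x ∉ wqSets t := h
    have ht : t ∉ Dset {q : ℚ | x q = true} := h
    rw [wqChar, Set.indicator_of_notMem hx, Set.indicator_of_notMem ht]

lemma continuous_indicator_clopen {D : Set wQ} (ho : IsOpen D) (hc : IsClosed D) :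
    Continuous (D.indicator fun _ => (1 : ℝ)) := by
  classical
  rw [continuous_def]
  intro U hU
  have heq : D.indicator (fun _ => (1 : ℝ)) ⁻¹' U =
      (if (1 : ℝ) ∈ U then D else ∅) ∪ (if (0 : ℝ) ∈ U then Dᶜ else ∅) := by
    ext t
    by_cases ht : t ∈ D <;> by_cases h1 : (1 : ℝ) ∈ U <;> by_cases h0 : (0 : ℝ) ∈ U <;>
      simp [Set.indicator_of_mem, Set.indicator_of_notMem, ht, h1, h0]
  rw [heq]
  apply IsOpen.union
  · split_ifs
    · exact ho
    · exact isOpen_empty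
  · split_ifs
    · exact hc.isOpen_compl
    · exact isOpen_empty

lemma continuous_wqChar_coord (x : ℚ → Bool) :
    Continuous (fun t : wQ => wqChar t x) := by
  rw [wqChar_eq_indicator]
  exact continuous_indicator_clopen (Dset_isOpen _) (Dset_isClosed _)

lemma wqChar_ne_zero (t : wQ) : wqChar t ≠ 0 := by
  intro h
  have h1 : wqChar t (chi t.1) = 1 := Set.indicator_of_mem (chi_mem_wqSets t) _
  rw [h] at h1
  simpa using h1

lemma wqChar_injective : Function.Injective wqChar := by
  intro s t h
  apply wqSets_injective
  ext x
  have hx := congrFun h x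
  simp only [wqChar] at hx
  by_cases hs : x ∈ wqSets s <;> by_cases ht : x ∈ wqSets t
  · exact iff_of_true hs ht
  · rw [Set.indicator_of_mem hs, Set.indicator_of_notMem ht] at hx
    norm_num at hx
  · rw [Set.indicator_of_notMem hs, Set.indicator_of_mem ht] at hx
    norm_num at hx
  · exact iff_of_false hs ht

/-- The underlying map of the homeomorphism. -/
noncomputable def wqFun : OnePoint wQ → ↥(Set.range wqChar ∪ ({0} : Set ((ℚ → Bool) → ℝ))) :=
  fun o => Option.elim o ⟨0, Or.inr rfl⟩ (fun t => ⟨wqChar t, Or.inl ⟨t, rfl⟩⟩)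

lemma wqFun_bijective : Function.Bijective wqFun := by
  constructor
  · intro o1 o2 h
    match o1, o2 with
    | none, none => rfl
    | none, Option.some t =>
      exact absurd (congrArg Subtype.val h).symm (wqChar_ne_zero t)
    | Option.some t, none =>
      exact absurd (congrArg Subtype.val h) (wqChar_ne_zero t)
    | Option.some s, Option.some t =>
      exact congrArg Option.some (wqChar_injective (congrArg Subtype.val h))
  · rintro ⟨f, hf⟩
    rcases hf with ⟨t, rfl⟩ | hf0
    · exact ⟨Option.some t, rfl⟩
    · exact ⟨none, Subtype.ext hf0.symm⟩

lemma wqFun_continuous : Continuous wqFun := by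
  rw [OnePoint.continuous_iff]
  constructor
  · rw [tendsto_subtype_rng]
    show Filter.Tendsto (fun t : wQ => wqChar t) (Filter.coclosedCompact wQ)
      (𝓝 (0 : (ℚ → Bool) → ℝ))
    rw [tendsto_pi_nhds]
    intro x
    rw [Filter.tendsto_def]
    intro V hV
    have h0 : (0 : ℝ) ∈ V := by simpa using mem_of_mem_nhds hV
    simp only [hasBasis_coclosedCompact.mem_iff, and_assoc]
    refine ⟨Dset {q : ℚ | x q = true}, Dset_isClosed _, Dset_isCompact _, ?_⟩
    intro t ht
    have hx : x ∉ wqSets t := ht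
    have hchar : wqChar t x = 0 := Set.indicator_of_notMem hx _
    show wqChar t x ∈ V
    rw [hchar]
    exact h0
  · apply Continuous.subtype_mk
    exact continuous_pi continuous_wqChar_coord

/-- The homeomorphism between `A(wℚ)` and `{1_{A_t}} ∪ {0}`. -/
noncomputable def wqHomeo :
    OnePoint wQ ≃ₜ ↥(Set.range wqChar ∪ ({0} : Set ((ℚ → Bool) → ℝ))) :=
  @Continuous.homeoOfEquivCompactToT2 _ _ _ _ _ _
    (Equiv.ofBijective wqFun wqFun_bijective) wqFun_continuous

lemma baireClassOne_indicator_closed {F : Set (ℚ → Bool)} (hF : IsClosed F)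
    (hne : F.Nonempty) : BaireClassOne (F.indicator fun _ => (1 : ℝ)) := by
  letI := TopologicalSpace.upgradeIsCompletelyMetrizable (ℚ → Bool)
  refine ⟨fun n x => max 0 (1 - n * Metric.infDist x F), ?_, ?_⟩
  · intro n
    exact continuous_const.max
      (continuous_const.sub (continuous_const.mul (Metric.continuous_infDist_pt F)))
  · intro x
    by_cases hx : x ∈ F
    · rw [Set.indicator_of_mem hx]
      have : ∀ n : ℕ, max 0 (1 - (n : ℝ) * Metric.infDist x F) = 1 := by
        intro n
        rw [Metric.infDist_zero_of_mem hx]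
        norm_num
      simp only [this]
      exact tendsto_const_nhds
    · rw [Set.indicator_of_notMem hx]
      have hd : 0 < Metric.infDist x F := (hF.notMem_iff_infDist_pos hne).1 hx
      apply Filter.Tendsto.congr' (f₁ := fun _ : ℕ => (0 : ℝ))
      · rw [Filter.eventuallyEq_iff_exists_mem]
        refine ⟨{n : ℕ | (⌈(Metric.infDist x F)⁻¹⌉₊ : ℕ) ≤ n}, Filter.mem_atTop _, ?_⟩
        intro n hn
        have h1 : (Metric.infDist x F)⁻¹ ≤ (n : ℝ) :=
          le_trans (Nat.le_ceil _) (Nat.cast_le.2 hn)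
        have h2 : 1 ≤ (n : ℝ) * Metric.infDist x F := by
          calc (1 : ℝ) = (Metric.infDist x F)⁻¹ * Metric.infDist x F :=
                (inv_mul_cancel₀ hd.ne').symm
            _ ≤ (n : ℝ) * Metric.infDist x F := mul_le_mul_of_nonneg_right h1 hd.le
        symm
        exact max_eq_left (by linarith)
      · exact tendsto_const_nhds

lemma baireClassOne_wqChar (t : wQ) : BaireClassOne (wqChar t) :=
  baireClassOne_indicator_closed (wqSets_isClosed t) (wqSets_nonempty t)

end Aux2

/-- The one-point compactification of `wℚ` is Rosenthal compact: `{A_t : t ∈ wℚ}` is a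
proper tree of sets whose members are simultaneously `F_σ` and `G_δ` in the Cantor set
`2^ℚ` (hence their characteristic functions are of Baire class one), and `A(wℚ)` is
homeomorphic to `{1_{A_t} : t ∈ wℚ} ∪ {0}` with `∞` corresponding to `0`. -/
theorem onePoint_wQ_isRosenthal :
    IsProperTreeOfSets wqSets ∧
    (∀ t : wQ, (∃ F : ℕ → Set (ℚ → Bool), (∀ n, IsClosed (F n)) ∧ wqSets t = ⋃ n, F n) ∧
      IsGδ (wqSets t)) ∧
    (∀ t : wQ, BaireClassOne (wqChar t)) ∧
    (∃ h : OnePoint wQ ≃ₜ ↥(Set.range wqChar ∪ {0}), (h OnePoint.infty).1 = 0) ∧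
    IsRosenthal (OnePoint wQ) := by
  refine ⟨⟨isTreeOfSets_wqSets, wqSets_nonempty, wqSets_injective⟩, ?_, baireClassOne_wqChar,
    ⟨wqHomeo, rfl⟩, ?_⟩
  · intro t
    refine ⟨⟨fun _ => wqSets t, fun _ => wqSets_isClosed t, (Set.iUnion_const _).symm⟩, ?_⟩
    haveI : (uniformity Bool).IsCountablyGenerated := by
      rw [bot_uniformity]
      infer_instance
    exact (wqSets_isClosed t).isGδ
  · refine ⟨inferInstance, ℚ → Bool, inferInstance, (by haveI : (uniformity Bool).IsCountablyGenerated := (by rw [bot_uniformity]; infer_instance); infer_instance),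
      Set.range wqChar ∪ {0}, ?_, ⟨wqHomeo⟩⟩
    intro f hf
    rcases hf with ⟨t, rfl⟩ | hf0
    · exact baireClassOne_wqChar t
    · have hf0' : f = 0 := hf0
      subst hf0'
      exact ⟨fun _ _ => 0, fun _ => continuous_const,
        fun x => by simpa using tendsto_const_nhds⟩
end
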